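/- arXiv:1602.07260 — 8 statements merged into one kernel-verified Lean document; each statement's English description precedes it below -/
import Mathlib

section
/- Let p : X̃ → X be a local homeomorphism, f : [0,1] → X a path, and x̃₀ ∈ p⁻¹(f(0)). If there is no lifting of f on all of [0,1] starting at x̃₀, then the set A_f = { t ∈ [0,1] : f|_{[0,t]} has a lifting starting at x̃₀ } equals a half-open interval [0, α) for some α ∈ (0,1]. -/
open unitInterval

/-- The set of `t ∈ [0,1]` such that `f` restricted to `[0,t]` admits a lifting
through `p` starting at `x'₀`. -/
def liftableSet {X' X : Type*} [TopologicalSpace X'] [TopologicalSpace X]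
    (p : X' → X) (f : C(I, X)) (x'₀ : X') : Set I :=
  {t : I | ∃ g : C({s : I // s ≤ t}, X'),
    (∀ s : {s : I // s ≤ t}, p (g s) = f s.1) ∧ g ⟨0, nonneg' (t := t)⟩ = x'₀}

section aux

variable {X' X : Type*} [TopologicalSpace X'] [TopologicalSpace X]
    (p : X' → X) (f : C(I, X)) (x'₀ : X')

/-- `liftableSet` is downward closed. -/
lemma liftable_down {s t : I} (hst : s ≤ t) (ht : t ∈ liftableSet p f x'₀) :
    s ∈ liftableSet p f x'₀ := by
  obtain ⟨g, hg, hg0⟩ := ht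
  refine ⟨g.comp ⟨fun u => ⟨u.1, u.2.trans hst⟩, by fun_prop⟩, fun u => hg _, ?_⟩
  simpa using hg0

lemma zero_mem_liftable (hx'₀ : p x'₀ = f 0) : (0 : I) ∈ liftableSet p f x'₀ := by
  refine ⟨⟨fun _ => x'₀, continuous_const⟩, fun s => ?_, rfl⟩
  have : s.1 = 0 := le_antisymm s.2 nonneg'
  rw [this]; exact hx'₀

/-- The extension lemma: a lifting over `[0,t]` with `t < 1` extends strictly further. -/
lemma liftable_extend (hp : IsLocalHomeomorph p) {t : I} (ht : t ∈ liftableSet p f x'₀)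
    (ht1 : t < 1) : ∃ t' : I, t < t' ∧ t' ∈ liftableSet p f x'₀ := by
  obtain ⟨g, hg, hg0⟩ := ht
  set x' : X' := g ⟨t, le_rfl⟩ with hx'
  obtain ⟨e, hxe, hpe⟩ := hp x'
  have hfx : f t = e x' := by
    have := hg ⟨t, le_rfl⟩
    rw [hpe] at this
    exact this.symm
  have hft : f t ∈ e.target := hfx ▸ e.map_source hxe
  have hU : f ⁻¹' e.target ∈ nhds t :=
    f.continuous.continuousAt.preimage_mem_nhds (e.open_target.mem_nhds hft)
  obtain ⟨u, htu, hu⟩ := exists_Ico_subset_of_mem_nhds hU ⟨1, ht1⟩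
  obtain ⟨t', htt', ht'u⟩ := exists_between htu
  have hIcc : ∀ s : I, t ≤ s → s ≤ t' → f s ∈ e.target := fun s h1 h2 =>
    hu ⟨h1, lt_of_le_of_lt h2 ht'u⟩
  refine ⟨t', htt', ?_⟩
  -- two globally-defined continuous branches
  set g₁ : {s : I // s ≤ t'} → X' := fun s => g ⟨min s.1 t, min_le_right _ _⟩ with hg₁
  set g₂ : {s : I // s ≤ t'} → X' := fun s => e.symm (f (max s.1 t)) with hg₂
  have hcg₁ : Continuous g₁ := by
    apply g.continuous.comp
    exact Continuous.subtype_mk (Continuous.min continuous_subtype_val continuous_const) _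
  have hmaxmem : ∀ s : {s : I // s ≤ t'}, f (max s.1 t) ∈ e.target := fun s =>
    hIcc _ (le_max_right _ _) (max_le s.2 htt'.le)
  have hcg₂ : Continuous g₂ :=
    e.continuousOn_symm.comp_continuous
      (f.continuous.comp (Continuous.max continuous_subtype_val continuous_const)) hmaxmem
  have hagree : ∀ s : {s : I // s ≤ t'}, s.1 = t → g₁ s = g₂ s := by
    intro s hs
    have h1 : g₁ s = x' := by
      simp only [hg₁]
      exact congrArg g (Subtype.ext (show min s.1 t = t by rw [hs, min_self]))
    have h2 : g₂ s = x' := by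
      simp only [hg₂]
      rw [show max s.1 t = t by rw [hs, max_self], hfx, e.left_inv hxe]
    rw [h1, h2]
  have hcont : Continuous fun s : {s : I // s ≤ t'} => if s.1 ≤ t then g₁ s else g₂ s :=
    Continuous.if_le hcg₁ hcg₂ continuous_subtype_val continuous_const hagree
  refine ⟨⟨_, hcont⟩, fun s => ?_, ?_⟩
  · by_cases h : s.1 ≤ t
    · simp only [ContinuousMap.coe_mk, if_pos h, hg₁]
      rw [hg ⟨min s.1 t, min_le_right _ _⟩]
      exact congrArg f (min_eq_left h)
    · simp only [ContinuousMap.coe_mk, if_neg h, hg₂, hpe]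
      rw [e.right_inv (hmaxmem s)]
      exact congrArg f (max_eq_left (le_of_not_ge h))
  · simp only [ContinuousMap.coe_mk, if_pos (nonneg' (t := t)), hg₁]
    rw [← hg0]
    exact congrArg g (Subtype.ext (min_eq_left nonneg'))

lemma one_notMem_liftable
    (hnolift : ¬ ∃ g : C(I, X'), (∀ t, p (g t) = f t) ∧ g 0 = x'₀) :
    (1 : I) ∉ liftableSet p f x'₀ := by
  rintro ⟨g, hg, hg0⟩
  exact hnolift ⟨g.comp ⟨fun t => ⟨t, le_one'⟩, by fun_prop⟩, fun t => hg _, hg0⟩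

end aux

/-- if `f` has no lifting on all of `[0,1]` starting at `x'₀`,
then `A_f = [0, α)` for some `α ∈ (0,1]`. -/
theorem stmt_2 {X' X : Type*} [TopologicalSpace X'] [TopologicalSpace X]
    (p : X' → X) (hp : IsLocalHomeomorph p)
    (f : C(I, X)) (x'₀ : X') (hx'₀ : p x'₀ = f 0)
    (hnolift : ¬ ∃ g : C(I, X'), (∀ t, p (g t) = f t) ∧ g 0 = x'₀) :
    ∃ α : I, 0 < α ∧ liftableSet p f x'₀ = Set.Ico 0 α := by
  set A := liftableSet p f x'₀ with hA
  have h0 : (0 : I) ∈ A := zero_mem_liftable p f x'₀ hx'₀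
  set S : Set ℝ := Subtype.val '' A with hS
  have hne : S.Nonempty := ⟨0, 0, h0, rfl⟩
  have hbdd : BddAbove S := ⟨1, by rintro x ⟨u, -, rfl⟩; exact u.2.2⟩
  have hα0 : (0 : ℝ) ≤ sSup S := le_csSup hbdd ⟨0, h0, rfl⟩
  have hα1 : sSup S ≤ 1 := csSup_le hne (by rintro x ⟨u, -, rfl⟩; exact u.2.2)
  set α : I := ⟨sSup S, hα0, hα1⟩ with hαdef
  have hle : ∀ u ∈ A, u ≤ α := fun u hu => Subtype.coe_le_coe.mp (le_csSup hbdd ⟨u, hu, rfl⟩)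
  have key : α ∉ A := by
    intro hα
    rcases lt_or_eq_of_le (le_one' (t := α)) with h | h
    · obtain ⟨t', ht'α, ht'⟩ := liftable_extend p f x'₀ hp hα h
      exact absurd (hle t' ht') (not_le_of_gt ht'α)
    · exact one_notMem_liftable p f x'₀ hnolift (h ▸ hα)
  have hpos : 0 < α := by
    obtain ⟨t', ht', ht'A⟩ := liftable_extend p f x'₀ hp h0
      (lt_of_le_of_ne nonneg' zero_ne_one)
    exact lt_of_lt_of_le ht' (hle t' ht'A)
  refine ⟨α, hpos, ?_⟩
  ext u
  constructor
  · intro hu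
    exact ⟨nonneg', lt_of_le_of_ne (hle u hu) (fun h => key (h ▸ hu))⟩
  · rintro ⟨-, huα⟩
    obtain ⟨x, ⟨v, hv, rfl⟩, hx⟩ := exists_lt_of_lt_csSup hne (Subtype.coe_lt_coe.mpr huα)
    exact liftable_down p f x'₀ (le_of_lt (Subtype.coe_lt_coe.mp hx)) hv
end

section
/- Let p : X̃ → X be a local homeomorphism with the unique path lifting property, f : [0,1] → X a path, and x̃₀ ∈ p⁻¹(f(0)) such that f has no lifting on [0,1] starting at x̃₀. Let [0,α) = A_f be the set of t for which f|_{[0,t]} has a lifting starting at x̃₀. Then there exists a unique continuous map f̃_α : [0,α) → X̃ with f̃_α(0) = x̃₀ and p ∘ f̃_α = f|_{[0,α)}. -/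
open unitInterval

/-- `p` has the unique path lifting property: two liftings of the same path
that agree at `0` are equal. -/
def UniquePathLifting {X' X : Type*} [TopologicalSpace X'] [TopologicalSpace X]
    (p : X' → X) : Prop :=
  ∀ g₁ g₂ : C(I, X'), (∀ t, p (g₁ t) = p (g₂ t)) → g₁ 0 = g₂ 0 → g₁ = g₂

lemma lift_unique_aux {X' X : Type*} [TopologicalSpace X'] [TopologicalSpace X]
    {p : X' → X} (hu : UniquePathLifting p) (t : I)
    (g₁ g₂ : C({s : I // s ≤ t}, X'))
    (h : ∀ s, p (g₁ s) = p (g₂ s))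
    (h0 : g₁ ⟨0, nonneg'⟩ = g₂ ⟨0, nonneg'⟩) : g₁ = g₂ := by
  rcases eq_or_lt_of_le (nonneg' (t := t)) with ht | ht
  · ext s
    have : s = ⟨0, nonneg'⟩ := Subtype.ext (le_antisymm (ht ▸ s.2) nonneg')
    rw [this]; exact h0
  · have ht0 : (0:ℝ) < (t:ℝ) := ht
    have hmul : ∀ s : I, (s : ℝ) * t ∈ I :=
      fun s => ⟨mul_nonneg s.2.1 t.2.1,
        le_trans (mul_le_of_le_one_left t.2.1 s.2.2) t.2.2⟩
    have hle : ∀ s : I, (⟨(s : ℝ) * t, hmul s⟩ : I) ≤ t := by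
      intro s
      show (s : ℝ) * t ≤ (t : ℝ)
      exact mul_le_of_le_one_left t.2.1 s.2.2
    let φ : C(I, {s : I // s ≤ t}) :=
      ⟨fun s => ⟨⟨(s : ℝ) * t, hmul s⟩, hle s⟩, by
        apply Continuous.subtype_mk
        apply Continuous.subtype_mk
        exact (continuous_subtype_val).mul continuous_const⟩
    have hφ0 : φ 0 = ⟨0, nonneg'⟩ := by
      apply Subtype.ext; apply Subtype.ext; simp [φ]
    have heq := hu (g₁.comp φ) (g₂.comp φ) (fun u => h _) (by
      simp only [ContinuousMap.comp_apply, hφ0]; exact h0)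
    ext s
    obtain ⟨⟨u, hu1, hu2⟩, hut⟩ := s
    have hd : (u / t : ℝ) ∈ I :=
      ⟨div_nonneg hu1 ht0.le, div_le_one_of_le₀ hut (le_of_lt ht0)⟩
    have : φ ⟨u / t, hd⟩ = ⟨⟨u, hu1, hu2⟩, hut⟩ := by
      apply Subtype.ext; apply Subtype.ext
      show (u / t) * t = u
      field_simp
    calc g₁ ⟨⟨u, hu1, hu2⟩, hut⟩ = g₁ (φ ⟨u / t, hd⟩) := by rw [this]
      _ = g₂ (φ ⟨u / t, hd⟩) := by
          have := congrFun (congrArg (fun h : C(I, X') => h.toFun) heq) ⟨u / t, hd⟩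
          simpa using this
      _ = g₂ ⟨⟨u, hu1, hu2⟩, hut⟩ := by rw [this]

lemma lift_compat {X' X : Type*} [TopologicalSpace X'] [TopologicalSpace X]
    {p : X' → X} (hu : UniquePathLifting p) (f : C(I, X)) (x'₀ : X')
    (t₁ t₂ : I) (h12 : t₁ ≤ t₂)
    (g₁ : C({s : I // s ≤ t₁}, X')) (g₂ : C({s : I // s ≤ t₂}, X'))
    (hg₁ : ∀ s, p (g₁ s) = f s.1) (hg₂ : ∀ s, p (g₂ s) = f s.1)
    (h₁0 : g₁ ⟨0, nonneg'⟩ = x'₀) (h₂0 : g₂ ⟨0, nonneg'⟩ = x'₀) :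
    ∀ (s : I) (hs : s ≤ t₁), g₁ ⟨s, hs⟩ = g₂ ⟨s, hs.trans h12⟩ := by
  let ι : C({s : I // s ≤ t₁}, {s : I // s ≤ t₂}) :=
    ⟨fun s => ⟨s.1, s.2.trans h12⟩, by
      exact Continuous.subtype_mk continuous_subtype_val _⟩
  have key : g₁ = g₂.comp ι := by
    apply lift_unique_aux hu t₁
    · intro s
      rw [hg₁ s]
      exact (hg₂ (ι s)).symm
    · rw [h₁0, ContinuousMap.comp_apply]
      convert h₂0.symm using 2
      rfl
  intro s hs
  have := congrFun (congrArg (fun h : C({s : I // s ≤ t₁}, X') => h.toFun) key) ⟨s, hs⟩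
  simpa [ι] using this

/-- the incomplete lifting on `[0, α) = A_f` exists and is unique. -/
theorem stmt_3 {X' X : Type*} [TopologicalSpace X'] [TopologicalSpace X]
    (p : X' → X) (hp : IsLocalHomeomorph p) (hu : UniquePathLifting p)
    (f : C(I, X)) (x'₀ : X') (hx'₀ : p x'₀ = f 0)
    (hnolift : ¬ ∃ g : C(I, X'), (∀ t, p (g t) = f t) ∧ g 0 = x'₀)
    (α : I) (hα : 0 < α) (hA : liftableSet p f x'₀ = Set.Ico 0 α) :
    ∃! g : C(Set.Ico (0 : I) α, X'),
      (∀ s : Set.Ico (0 : I) α, p (g s) = f s.1) ∧ g ⟨0, le_refl 0, hα⟩ = x'₀ := by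
  have hmem : ∀ s : Set.Ico (0 : I) α, s.1 ∈ liftableSet p f x'₀ := by
    intro s; rw [hA]; exact s.2
  choose lifts hl1 hl2 using hmem
  set G : Set.Ico (0 : I) α → X' := fun s => lifts s ⟨s.1, le_rfl⟩ with hG
  -- G agrees with any lift on [0,t] below t
  have hagree : ∀ (t : I) (g : C({s : I // s ≤ t}, X'))
      (hg : ∀ s, p (g s) = f s.1) (hg0 : g ⟨0, nonneg'⟩ = x'₀)
      (s : Set.Ico (0 : I) α) (hst : s.1 ≤ t), G s = g ⟨s.1, hst⟩ := by
    intro t g hg hg0 s hst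
    exact lift_compat hu f x'₀ s.1 t hst (lifts s) g (hl1 s) hg (hl2 s) hg0 s.1 le_rfl
  have hGcont : Continuous G := by
    rw [continuous_iff_continuousAt]
    intro s₀
    have hs₀α : (s₀.1 : ℝ) < α := s₀.2.2
    have htI : ((s₀.1 : ℝ) + α) / 2 ∈ I := by
      constructor
      · have := s₀.1.2.1
        have := α.2.1
        linarith
      · have := α.2.2
        have := s₀.1.2.2
        linarith
    set t : I := ⟨((s₀.1 : ℝ) + α) / 2, htI⟩ with htdef
    have hst : (s₀.1 : ℝ) < t := by show (s₀.1:ℝ) < _; simp [htdef]; linarith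
    have htα : (t : ℝ) < α := by simp [htdef]; linarith
    have htmem : t ∈ liftableSet p f x'₀ := by
      rw [hA]; exact ⟨nonneg', htα⟩
    obtain ⟨g, hg, hg0⟩ := htmem
    set U : Set (Set.Ico (0 : I) α) := {s | (s.1 : ℝ) < t} with hU
    have hUopen : IsOpen U := by
      have : Continuous fun s : Set.Ico (0 : I) α => (s.1 : ℝ) :=
        continuous_subtype_val.subtype_val
      exact isOpen_Iio.preimage this
    have hUs₀ : s₀ ∈ U := hst
    have hGU : ContinuousOn G U := by
      rw [continuousOn_iff_continuous_restrict]
      have : U.domRestrict G = fun u : U => g ⟨u.1.1, le_of_lt u.2⟩ := by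
        funext u
        exact hagree t g hg hg0 u.1 (le_of_lt u.2)
      rw [this]
      exact g.continuous.comp (Continuous.subtype_mk
        (continuous_subtype_val.comp continuous_subtype_val) _)
    exact hGU.continuousAt (hUopen.mem_nhds hUs₀)
  refine ⟨⟨G, hGcont⟩, ⟨fun s => hl1 s ⟨s.1, le_rfl⟩, ?_⟩, ?_⟩
  · show G ⟨0, le_refl 0, hα⟩ = x'₀
    have := hl2 ⟨0, le_refl 0, hα⟩
    convert this using 2
  · rintro g' ⟨hg'1, hg'2⟩
    ext s
    show g' s = G s
    -- restrict g' to [0, s.1]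
    let r : C({u : I // u ≤ s.1}, X') :=
      g'.comp ⟨fun u => ⟨u.1, ⟨nonneg', lt_of_le_of_lt u.2 s.2.2⟩⟩, by
        exact Continuous.subtype_mk continuous_subtype_val _⟩
    have hr1 : ∀ u, p (r u) = f u.1 := fun u => hg'1 _
    have hr0 : r ⟨0, nonneg'⟩ = x'₀ := by
      show g' ⟨0, _⟩ = x'₀
      convert hg'2 using 2
    have := hagree s.1 r hr1 hr0 s le_rfl
    rw [this]
    rfl
end

section
/- Let p : X̃ → X be a closed local homeomorphism from a Hausdorff space X̃ onto a topological space X. Then p has the path lifting property: every path f : [0,1] → X with chosen x̃₀ ∈ p⁻¹(f(0)) admits a continuous lifting f̃ : [0,1] → X̃ starting at x̃₀. -/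
open unitInterval

/-- `p` has the path lifting property. -/
def PathLifting {X' X : Type*} [TopologicalSpace X'] [TopologicalSpace X]
    (p : X' → X) : Prop :=
  ∀ (f : C(I, X)) (x'₀ : X'), p x'₀ = f 0 →
    ∃ g : C(I, X'), (∀ t, p (g t) = f t) ∧ g 0 = x'₀

lemma aux_image_Icc (a b : I) : Subtype.val '' (Set.Icc a b) = Set.Icc (a : ℝ) (b : ℝ) := by
  ext r
  constructor
  · rintro ⟨u, ⟨h1, h2⟩, rfl⟩
    exact ⟨h1, h2⟩
  · rintro ⟨h1, h2⟩
    exact ⟨⟨r, le_trans a.2.1 h1, le_trans h2 b.2.2⟩, ⟨h1, h2⟩, rfl⟩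

lemma aux_isPreconnected_Icc (a b : I) : IsPreconnected (Set.Icc a b) := by
  rw [← Topology.IsInducing.subtypeVal.isPreconnected_image, aux_image_Icc]
  exact isPreconnected_Icc

/-- a closed local homeomorphism from a Hausdorff space onto a
space `X` has the path lifting property. -/
theorem stmt_6 {X' X : Type*} [TopologicalSpace X'] [TopologicalSpace X]
    [T2Space X'] (p : X' → X) (hp : IsLocalHomeomorph p)
    (hclosed : IsClosedMap p) (hsurj : Function.Surjective p) :
    PathLifting p := by
  intro f x'₀ h₀
  classical
  have sep : IsSeparatedMap p := T2Space.isSeparatedMap p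
  have inj : IsLocallyInjective p := hp.isLocallyInjective
  set T : Set I := {t | ∃ g : C(I, X'), g 0 = x'₀ ∧ ∀ s ≤ t, p (g s) = f s} with hTdef
  have h0T : (0 : I) ∈ T := by
    refine ⟨ContinuousMap.const I x'₀, rfl, fun s hs => ?_⟩
    have hs0 : s = 0 := le_antisymm hs nonneg'
    rw [hs0]
    simpa using h₀
  have hdown : ∀ {a b : I}, a ≤ b → b ∈ T → a ∈ T := by
    rintro a b hab ⟨g, hg0, hg⟩
    exact ⟨g, hg0, fun s hs => hg s (hs.trans hab)⟩
  have huniq : ∀ (t : I) (g₁ g₂ : C(I, X')), g₁ 0 = x'₀ → g₂ 0 = x'₀ →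
      (∀ s ≤ t, p (g₁ s) = f s) → (∀ s ≤ t, p (g₂ s) = f s) → ∀ s ≤ t, g₁ s = g₂ s := by
    intro t g₁ g₂ h10 h20 h1 h2 s hs
    have := sep.eqOn_of_comp_eqOn inj (aux_isPreconnected_Icc 0 t)
      g₁.continuous.continuousOn g₂.continuous.continuousOn
      (fun u hu => show p (g₁ u) = p (g₂ u) from (h1 u hu.2).trans (h2 u hu.2).symm)
      (⟨le_rfl, nonneg'⟩ : (0 : I) ∈ Set.Icc 0 t) (h10.trans h20.symm)
    exact this ⟨nonneg', hs⟩
  -- the supremum of T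
  have hbdd : BddAbove (Subtype.val '' T) := ⟨1, by rintro r ⟨u, _, rfl⟩; exact u.2.2⟩
  have hne : (Subtype.val '' T).Nonempty := ⟨0, 0, h0T, rfl⟩
  have hu0 : (0 : ℝ) ≤ sSup (Subtype.val '' T) := le_csSup hbdd ⟨0, h0T, rfl⟩
  have hu1 : sSup (Subtype.val '' T) ≤ 1 := csSup_le hne (by rintro r ⟨u, _, rfl⟩; exact u.2.2)
  set tm : I := ⟨sSup (Subtype.val '' T), hu0, hu1⟩ with htm
  have hub : ∀ b ∈ T, b ≤ tm := by
    intro b hb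
    exact Subtype.coe_le_coe.mp (le_csSup hbdd ⟨b, hb, rfl⟩)
  have hlt : ∀ a : I, a < tm → a ∈ T := by
    intro a ha
    obtain ⟨r, ⟨b, hbT, rfl⟩, hr⟩ := exists_lt_of_lt_csSup hne (Subtype.coe_lt_coe.mpr ha)
    exact hdown (le_of_lt (Subtype.coe_lt_coe.mp hr)) hbT
  -- the canonical partial lift values
  choose gl hgl0 hgl using fun (t : I) (ht : t ∈ T) => ht
  set e : I → X' := fun t => if h : t ∈ T then gl t h t else x'₀ with he_def
  have he : ∀ (t : I) (ht : t ∈ T) (g : C(I, X')), g 0 = x'₀ →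
      (∀ s ≤ t, p (g s) = f s) → e t = g t := by
    intro t ht g hg0 hg
    simp only [he_def, dif_pos ht]
    exact huniq t (gl t ht) g (hgl0 t ht) hg0 (hgl t ht) hg t le_rfl
  have hpe : ∀ (t : I), t ∈ T → p (e t) = f t := by
    intro t ht
    simp only [he_def, dif_pos ht]
    exact hgl t ht t le_rfl
  -- extension lemma: from a lift up to `a` through a sheet `E` covering `f` on `[a,b]`
  have hext : ∀ (a b : I) (E : OpenPartialHomeomorph X' X), ⇑E = p → a ∈ T → a ≤ b →
      e a ∈ E.source → (∀ u : I, a ≤ u → u ≤ b → f u ∈ E.target) → b ∈ T := by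
    intro a b E hEp haT hab hsrc htar
    obtain ⟨g, hg0, hg⟩ := haT
    have haT' : a ∈ T := ⟨g, hg0, hg⟩
    have hga : g a ∈ E.source := by rw [← he a haT' g hg0 hg]; exact hsrc
    have hmid : ∀ u : I, max (a : ℝ) (min (u : ℝ) (b : ℝ)) ∈ Set.Icc (0 : ℝ) 1 := by
      intro u
      constructor
      · exact le_max_of_le_left a.2.1
      · exact max_le a.2.2 (le_trans (min_le_right _ _) b.2.2)
    set m : I → I := fun u => ⟨max (a : ℝ) (min (u : ℝ) (b : ℝ)), hmid u⟩ with hm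
    have hmcont : Continuous m :=
      Continuous.subtype_mk (continuous_const.max (continuous_subtype_val.min continuous_const)) _
    have hmmem : ∀ u : I, a ≤ m u ∧ m u ≤ b := by
      intro u
      constructor
      · exact Subtype.coe_le_coe.mp (le_max_left _ _)
      · exact Subtype.coe_le_coe.mp
          (max_le (Subtype.coe_le_coe.mpr hab) (min_le_right _ _))
    have hcont2 : Continuous fun u : I => E.symm (f (m u)) := by
      have := E.continuousOn_symm.comp_continuous (f.continuous.comp hmcont)
        (fun u => htar (m u) (hmmem u).1 (hmmem u).2)
      exact this
    set h : I → X' := fun u => if u ≤ a then g u else E.symm (f (m u)) with hh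
    have hcont : Continuous h := by
      refine Continuous.if_le g.continuous hcont2 continuous_id continuous_const ?_
      intro u hu
      have hma : m a = a := by
        apply Subtype.ext
        show max (a : ℝ) (min (a : ℝ) (b : ℝ)) = a
        rw [min_eq_left (Subtype.coe_le_coe.mpr hab), max_self]
      have hu' : u = a := hu
      rw [hu', hma]
      have hfa : f a = p (g a) := (hg a le_rfl).symm
      rw [hfa, ← hEp]
      exact (E.left_inv hga).symm
    refine ⟨⟨h, hcont⟩, ?_, ?_⟩
    · show h 0 = x'₀
      simp only [hh]
      rw [if_pos (nonneg' : (0 : I) ≤ a)]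
      exact hg0
    · intro s hs
      show p (h s) = f s
      by_cases hsa : s ≤ a
      · simp only [hh]
        rw [if_pos hsa]
        exact hg s hsa
      · simp only [hh]
        rw [if_neg hsa]
        have has : a ≤ s := (not_le.mp hsa).le
        have hms : m s = s := by
          apply Subtype.ext
          show max (a : ℝ) (min (s : ℝ) (b : ℝ)) = s
          rw [min_eq_left (Subtype.coe_le_coe.mpr hs), max_eq_right (Subtype.coe_le_coe.mpr has)]
        rw [hms, ← hEp]
        exact E.right_inv (htar s has hs)
  -- neighborhood extraction lemmas (via the metric on I)
  have hIoc : ∀ O : Set I, IsOpen O → tm ∈ O → 0 < tm →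
      ∃ s₂ : I, s₂ < tm ∧ ∀ u : I, s₂ < u → u ≤ tm → u ∈ O := by
    intro O hO htmO h0
    obtain ⟨ε, hε, hball⟩ := Metric.isOpen_iff.mp hO tm htmO
    have hmem : max 0 ((tm : ℝ) - ε / 2) ∈ Set.Icc (0 : ℝ) 1 :=
      ⟨le_max_left _ _, max_le zero_le_one (by linarith [tm.2.2])⟩
    refine ⟨⟨max 0 ((tm : ℝ) - ε / 2), hmem⟩, ?_, ?_⟩
    · apply Subtype.coe_lt_coe.mp
      exact max_lt (Subtype.coe_lt_coe.mpr h0) (by linarith)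
    · intro u hsu hut
      apply hball
      have h1 : (tm : ℝ) - ε / 2 < (u : ℝ) :=
        lt_of_le_of_lt (le_max_right _ _) (Subtype.coe_lt_coe.mpr hsu)
      have h2 : (u : ℝ) ≤ tm := Subtype.coe_le_coe.mpr hut
      show dist u tm < ε
      rw [Subtype.dist_eq, Real.dist_eq, abs_sub_lt_iff]
      constructor <;> linarith
  have hIcc : ∀ O : Set I, IsOpen O → tm ∈ O → tm < 1 →
      ∃ b : I, tm < b ∧ ∀ u : I, tm ≤ u → u ≤ b → u ∈ O := by
    intro O hO htmO h1
    obtain ⟨ε, hε, hball⟩ := Metric.isOpen_iff.mp hO tm htmO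
    have hmem : min 1 ((tm : ℝ) + ε / 2) ∈ Set.Icc (0 : ℝ) 1 :=
      ⟨le_min zero_le_one (by linarith [tm.2.1]), min_le_left _ _⟩
    refine ⟨⟨min 1 ((tm : ℝ) + ε / 2), hmem⟩, ?_, ?_⟩
    · apply Subtype.coe_lt_coe.mp
      exact lt_min (Subtype.coe_lt_coe.mpr h1) (by linarith)
    · intro u htu hub'
      apply hball
      have h2 : (u : ℝ) ≤ (tm : ℝ) + ε / 2 :=
        le_trans (Subtype.coe_le_coe.mpr hub') (min_le_right _ _)
      have h3 : (tm : ℝ) ≤ u := Subtype.coe_le_coe.mpr htu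
      show dist u tm < ε
      rw [Subtype.dist_eq, Real.dist_eq, abs_sub_lt_iff]
      constructor <;> linarith
  -- the crux: a sheet through which the lift approaches `tm`
  have hmid2 : ∀ r : I, r < tm → ∃ a : I, r < a ∧ a < tm := by
    intro r hr
    have hrr : (r : ℝ) < tm := Subtype.coe_lt_coe.mpr hr
    have hmem : ((r : ℝ) + tm) / 2 ∈ Set.Icc (0 : ℝ) 1 :=
      ⟨by linarith [r.2.1, tm.2.1], by linarith [r.2.2, tm.2.2]⟩
    exact ⟨⟨((r : ℝ) + tm) / 2, hmem⟩,
      Subtype.coe_lt_coe.mp (by simp only; linarith),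
      Subtype.coe_lt_coe.mp (by simp only; linarith)⟩
  have hcrux : 0 < tm → ∃ E : OpenPartialHomeomorph X' X, ⇑E = p ∧ f tm ∈ E.target ∧
      ∀ s : I, s < tm → ∃ a : I, s < a ∧ a < tm ∧ e a ∈ E.source := by
    intro ht0
    by_cases hc : ∀ s : I, s < tm → ∃ τ : I, s < τ ∧ τ < tm ∧ f τ ≠ f tm
    · -- Case 2 : `f` takes values ≠ f tm arbitrarily close to tm
      have ht0' : (0 : ℝ) < tm := Subtype.coe_lt_coe.mpr ht0
      have hsgmem : ∀ n : ℕ, (tm : ℝ) - (tm : ℝ) / (n + 1) ∈ Set.Icc (0 : ℝ) 1 := by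
        intro n
        constructor
        · have : (tm : ℝ) / (n + 1) ≤ (tm : ℝ) / 1 := by
            apply div_le_div_of_nonneg_left tm.2.1 one_pos
            · exact le_add_of_nonneg_left (Nat.cast_nonneg n)
          simp at this
          linarith
        · have : (0 : ℝ) ≤ (tm : ℝ) / (n + 1) := by positivity
          linarith [tm.2.2]
      set sg : ℕ → I := fun n => ⟨(tm : ℝ) - (tm : ℝ) / (n + 1), hsgmem n⟩ with hsg
      have hsglt : ∀ n, sg n < tm := by
        intro n
        apply Subtype.coe_lt_coe.mp
        have : (0 : ℝ) < (tm : ℝ) / (n + 1) := by positivity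
        show (tm : ℝ) - (tm : ℝ) / (n + 1) < tm
        linarith
      choose τ hsgτ hτlt hτne using fun n => hc (sg n) (hsglt n)
      have hτT : ∀ n, τ n ∈ T := fun n => hlt _ (hτlt n)
      have hdivtend : Filter.Tendsto (fun n : ℕ => (tm : ℝ) / (n + 1)) Filter.atTop (nhds 0) := by
        have h1 := tendsto_one_div_add_atTop_nhds_zero_nat.const_mul (tm : ℝ)
        simp only [mul_one_div] at h1
        simpa using h1
      have hsgtend : Filter.Tendsto (fun n : ℕ => ((sg n : I) : ℝ)) Filter.atTop (nhds (tm : ℝ)) := by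
        have := Filter.Tendsto.sub (tendsto_const_nhds (x := (tm : ℝ)) (f := Filter.atTop (α := ℕ)))
          hdivtend
        simpa using this
      have hτtend : Filter.Tendsto (fun n : ℕ => ((τ n : I) : ℝ)) Filter.atTop (nhds (tm : ℝ)) := by
        apply tendsto_of_tendsto_of_tendsto_of_le_of_le hsgtend tendsto_const_nhds
        · exact fun n => (Subtype.coe_lt_coe.mpr (hsgτ n)).le
        · exact fun n => Subtype.coe_le_coe.mpr (hτlt n).le
      have hτtend' : Filter.Tendsto (fun n : ℕ => τ n) Filter.atTop (nhds tm) :=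
        tendsto_subtype_rng.mpr hτtend
      have hftend : Filter.Tendsto (fun n : ℕ => f (τ n)) Filter.atTop (nhds (f tm)) :=
        (f.continuous.tendsto tm).comp hτtend'
      set S : ℕ → Set X' := fun mm => (fun n => e (τ n)) '' Set.Ici mm with hS
      have hxcl : f tm ∈ p '' closure (S 0) := by
        refine (hclosed _ isClosed_closure).mem_of_tendsto hftend
          (Filter.Eventually.of_forall fun n => ?_)
        exact ⟨e (τ n), subset_closure ⟨n, Nat.zero_le n, rfl⟩, hpe _ (hτT n)⟩
      obtain ⟨c, hccl, hpc⟩ := hxcl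
      have hcnot : ∀ k, c ≠ e (τ k) := by
        intro k hk
        apply hτne k
        rw [← hpe _ (hτT k), ← hk, hpc]
      have hctail : ∀ mm : ℕ, c ∈ closure (S mm) := by
        intro mm
        have hsplit : S 0 ⊆ S mm ∪ (fun n => e (τ n)) '' Set.Iio mm := by
          rintro z ⟨n, -, rfl⟩
          rcases lt_or_ge n mm with h | h
          · exact Or.inr ⟨n, h, rfl⟩
          · exact Or.inl ⟨n, h, rfl⟩
        have hfin : IsClosed ((fun n => e (τ n)) '' Set.Iio mm) :=
          (Set.Finite.image _ (Set.finite_Iio mm)).isClosed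
        have hcc := closure_mono hsplit hccl
        rw [closure_union, hfin.closure_eq] at hcc
        rcases hcc with h | h
        · exact h
        · obtain ⟨k, -, hk⟩ := h
          exact absurd hk.symm (hcnot k)
      obtain ⟨E, hcE, hEp⟩ := hp c
      refine ⟨E, hEp.symm, ?_, ?_⟩
      · rw [← hpc, hEp]
        exact E.map_source hcE
      · intro s hs
        have hev : ∀ᶠ n in Filter.atTop, (s : ℝ) < τ n :=
          hτtend.eventually (lt_mem_nhds (Subtype.coe_lt_coe.mpr hs))
        obtain ⟨mm, hmm⟩ := Filter.eventually_atTop.mp hev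
        obtain ⟨z, hzE, hzS⟩ := (_root_.mem_closure_iff.mp (hctail mm)) E.source
          E.open_source hcE
        obtain ⟨n, hnm, rfl⟩ := hzS
        exact ⟨τ n, Subtype.coe_lt_coe.mp (hmm n hnm), hτlt n, hzE⟩
    · -- Case 1 : `f` is locally constant at tm from the left
      push_neg at hc
      obtain ⟨s₀, hs₀, hconst⟩ := hc
      obtain ⟨τ₀, hτ₀l, hτ₀r⟩ := hmid2 s₀ hs₀
      have hτ₀T := hlt _ hτ₀r
      have hpτ₀ : p (e τ₀) = f tm := by
        rw [hpe _ hτ₀T]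
        exact hconst τ₀ hτ₀l hτ₀r
      have pair : ∀ sg₁ sg₂ : I, s₀ < sg₁ → sg₂ < tm → sg₁ ≤ sg₂ → e sg₂ = e sg₁ := by
        intro sg₁ sg₂ h1 h2 h12
        have hsg₂T := hlt _ h2
        obtain ⟨g, hg0, hg⟩ := hsg₂T
        have hsg₂T' : sg₂ ∈ T := ⟨g, hg0, hg⟩
        have heqOn : Set.EqOn g (fun _ => e sg₁) (Set.Icc sg₁ sg₂) := by
          apply sep.eqOn_of_comp_eqOn inj (aux_isPreconnected_Icc sg₁ sg₂)
            g.continuous.continuousOn continuousOn_const ?_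
            (⟨le_rfl, h12⟩ : sg₁ ∈ Set.Icc sg₁ sg₂) ?_
          · intro u hu
            show p (g u) = p (e sg₁)
            rw [hg u hu.2, hpe _ (hdown h12 hsg₂T'),
              hconst u (h1.trans_le hu.1) (lt_of_le_of_lt hu.2 h2),
              hconst sg₁ h1 (lt_of_le_of_lt h12 h2)]
          · exact (he sg₁ (hdown h12 hsg₂T') g hg0 fun s hs => hg s (hs.trans h12)).symm
        have hval := heqOn (⟨h12, le_rfl⟩ : sg₂ ∈ Set.Icc sg₁ sg₂)
        rw [← he sg₂ hsg₂T' g hg0 hg] at hval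
        exact hval
      have hkey : ∀ a : I, s₀ < a → a < tm → e a = e τ₀ := by
        intro a hal har
        rcases le_total τ₀ a with hle | hle
        · exact pair τ₀ a hτ₀l har hle
        · exact (pair a τ₀ hal hτ₀r hle).symm
      obtain ⟨E, hcE, hEp⟩ := hp (e τ₀)
      refine ⟨E, hEp.symm, by rw [← hpτ₀, hEp]; exact E.map_source hcE, ?_⟩
      intro s hs
      obtain ⟨a, hal, har⟩ := hmid2 (max s s₀) (max_lt hs hs₀)
      refine ⟨a, lt_of_le_of_lt (le_max_left s s₀) hal, har, ?_⟩
      rw [hkey a (lt_of_le_of_lt (le_max_right s s₀) hal) har]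
      exact hcE
  -- tm ∈ T
  have htT : tm ∈ T := by
    rcases (nonneg' : (0 : I) ≤ tm).eq_or_lt with h0 | h0
    · exact h0 ▸ h0T
    · obtain ⟨E, hEp, hft, H⟩ := hcrux h0
      have hO : IsOpen (f ⁻¹' E.target) := E.open_target.preimage f.continuous
      obtain ⟨s₂, hs₂, hs₂sub⟩ := hIoc _ hO hft h0
      obtain ⟨a, hsa, hat, haE⟩ := H s₂ hs₂
      exact hext a tm E hEp (hlt a hat) hat.le haE
        (fun u hau hut => hs₂sub u (lt_of_lt_of_le hsa hau) hut)
  -- tm = 1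
  have ht1 : tm = (1 : I) := by
    by_contra hne'
    have h1 : tm < 1 := lt_of_le_of_ne le_one' hne'
    obtain ⟨g, hg0, hg⟩ := htT
    have htT' : tm ∈ T := ⟨g, hg0, hg⟩
    obtain ⟨E, hgE, hEp⟩ := hp (g tm)
    have hft : f tm ∈ E.target := by
      rw [← hg tm le_rfl, hEp]
      exact E.map_source hgE
    obtain ⟨b, htb, hbsub⟩ := hIcc _ (E.open_target.preimage f.continuous) hft h1
    have hbT := hext tm b E hEp.symm htT' htb.le
      (by rw [he tm htT' g hg0 hg]; exact hgE) (fun u hu1 hu2 => hbsub u hu1 hu2)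
    exact absurd (hub b hbT) (not_le.mpr htb)
  obtain ⟨g, hg0, hg⟩ := htT
  exact ⟨g, fun t => hg t (ht1 ▸ le_one'), hg0⟩
end

section
/- Let p : X̃ → X be a closed local homeomorphism from a Hausdorff space X̃ onto a topological space X. Then p has both the path lifting and unique path lifting properties (i.e., p is a semicovering map). -/
open unitInterval

section Aux

variable {X' X : Type*} [TopologicalSpace X'] [TopologicalSpace X] [T2Space X'] {p : X' → X}

/-- Uniqueness of lifts through a local homeomorphism with Hausdorff domain,
over a preconnected space. -/
lemma loc_eq_aux (hp : IsLocalHomeomorph p) {Y : Type*} [TopologicalSpace Y]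
    [PreconnectedSpace Y] {g₁ g₂ : Y → X'} (h₁ : Continuous g₁) (h₂ : Continuous g₂)
    (h : ∀ t, p (g₁ t) = p (g₂ t)) {t₀ : Y} (h0 : g₁ t₀ = g₂ t₀) : ∀ t, g₁ t = g₂ t := by
  have hclopen : IsClopen {t | g₁ t = g₂ t} := by
    constructor
    · exact isClosed_eq h₁ h₂
    · rw [isOpen_iff_mem_nhds]
      intro t ht
      obtain ⟨e, hmem, hpe⟩ := hp (g₁ t)
      have hmem2 : g₂ t ∈ e.source := by rw [← ht]; exact hmem
      have hnh : (g₁ ⁻¹' e.source ∩ g₂ ⁻¹' e.source) ∈ nhds t :=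
        Filter.inter_mem (h₁.continuousAt.preimage_mem_nhds (e.open_source.mem_nhds hmem))
          (h₂.continuousAt.preimage_mem_nhds (e.open_source.mem_nhds hmem2))
      filter_upwards [hnh] with u hu
      exact e.injOn hu.1 hu.2 (by rw [← hpe]; exact h u)
  have huniv : {t | g₁ t = g₂ t} = Set.univ :=
    (isClopen_iff.mp hclopen).resolve_left (Set.Nonempty.ne_empty ⟨t₀, h0⟩)
  intro t
  exact Set.eq_univ_iff_forall.mp huniv t

/-- The key lemma: lifting of (real-parametrized, clamped) paths. -/
lemma key_lift (hp : IsLocalHomeomorph p) (hclosed : IsClosedMap p)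
    (f : C(ℝ, X)) (x'₀ : X') (hx0 : p x'₀ = f 0) :
    ∃ g : C(ℝ, X'), (∀ t, p (g t) = f (max (min t 1) 0)) ∧ g 0 = x'₀ := by
  classical
  set S : Set ℝ := {s | 0 ≤ s ∧ s ≤ 1 ∧
    ∃ g : C(ℝ, X'), (∀ t, p (g t) = f (max (min t s) 0)) ∧ g 0 = x'₀} with hS
  have h0S : (0:ℝ) ∈ S := by
    refine ⟨le_refl 0, zero_le_one, ContinuousMap.const ℝ x'₀, fun t => ?_, rfl⟩
    have h1 : max (min t 0) 0 = 0 := max_eq_right (min_le_right t 0)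
    rw [h1]
    simpa using hx0
  have hdown : ∀ s ∈ S, ∀ s', 0 ≤ s' → s' ≤ s → s' ∈ S := by
    rintro s ⟨hs0, hs1, g, hg, hg0⟩ s' h0' hle
    refine ⟨h0', hle.trans hs1,
      g.comp ⟨fun t => min t s', continuous_id.min continuous_const⟩, fun t => ?_, ?_⟩
    · simp only [ContinuousMap.comp_apply, ContinuousMap.coe_mk]
      rw [hg (min t s'), min_eq_left (le_trans (min_le_right t s') hle)]
    · simp only [ContinuousMap.comp_apply, ContinuousMap.coe_mk]
      rw [min_eq_left h0', hg0]
  -- openness step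
  have hopenstep : ∀ s ∈ S, s < 1 → ∃ s' ∈ S, s < s' := by
    rintro s ⟨hs0, hs1, g, hg, hg0⟩ hlt
    obtain ⟨e, hy, hpe⟩ := hp (g s)
    have hfs : p (g s) = f s := by
      rw [hg s, min_self, max_eq_left hs0]
    have hfst : f s ∈ e.target := by
      rw [← hfs, hpe]; exact e.map_source hy
    have hnhds : f ⁻¹' e.target ∈ nhds s :=
      (e.open_target.preimage f.continuous).mem_nhds hfst
    obtain ⟨ε, hε, hball⟩ := Metric.mem_nhds_iff.mp hnhds
    set s' := min 1 (s + ε/2) with hs'def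
    have hss' : s < s' := lt_min hlt (by linarith)
    have h0s' : 0 ≤ s' := le_min zero_le_one (by linarith)
    have hs'1 : s' ≤ 1 := min_le_left _ _
    have hsub : ∀ t, s ≤ t → t ≤ s' → f t ∈ e.target := by
      intro t h1 h2
      apply hball
      rw [Metric.mem_ball, Real.dist_eq, abs_lt]
      have h3 : t ≤ s + ε/2 := h2.trans (min_le_right _ _)
      constructor <;> linarith
    set clamp : ℝ → ℝ := fun t => min (max t s) s' with hclampdef
    have hclampc : Continuous clamp := (continuous_id.max continuous_const).min continuous_const
    have hclamp1 : ∀ t, s ≤ clamp t := fun t => le_min (le_max_right t s) hss'.le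
    have hclamp2 : ∀ t, clamp t ≤ s' := fun t => min_le_right _ _
    have hbr : Continuous fun t => e.symm (f (clamp t)) :=
      e.continuousOn_symm.comp_continuous (f.continuous.comp hclampc)
        (fun t => hsub _ (hclamp1 t) (hclamp2 t))
    have hmatch : ∀ t : ℝ, t = s → g t = e.symm (f (clamp t)) := by
      intro t ht
      rw [ht]
      have h1 : clamp s = s := by
        simp only [hclampdef]; rw [max_self, min_eq_left hss'.le]
      rw [h1, ← hfs, hpe, e.left_inv hy]
    refine ⟨s', ⟨h0s', hs'1, ⟨fun t => if t ≤ s then g t else e.symm (f (clamp t)),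
      Continuous.if_le g.continuous hbr continuous_id continuous_const hmatch⟩,
      fun t => ?_, ?_⟩, hss'⟩
    · simp only [ContinuousMap.coe_mk]
      by_cases ht : t ≤ s
      · rw [if_pos ht, hg t, min_eq_left ht, min_eq_left (ht.trans hss'.le)]
      · rw [if_neg ht]
        push_neg at ht
        have hcl : clamp t = min t s' := by
          simp only [hclampdef]; rw [max_eq_left ht.le]
        have hmem : f (clamp t) ∈ e.target := hsub _ (hclamp1 t) (hclamp2 t)
        have h2 : p (e.symm (f (clamp t))) = f (clamp t) := by
          rw [hpe]; exact e.right_inv hmem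
        rw [h2, hcl, max_eq_left (le_min (hs0.trans ht.le) h0s')]
    · simp only [ContinuousMap.coe_mk]
      rw [if_pos hs0, hg0]
  -- closedness step
  have hclosedstep : ∀ s, 0 < s → s ≤ 1 → (∀ t, 0 ≤ t → t < s → t ∈ S) → s ∈ S := by
    intro s hs0 hs1 hall
    have hex : ∀ u, 0 ≤ u → u < s →
        ∃ g : C(ℝ, X'), (∀ t, p (g t) = f (max (min t u) 0)) ∧ g 0 = x'₀ :=
      fun u h1 h2 => (hall u h1 h2).2.2
    have hnon : Nonempty C(ℝ, X') := ⟨ContinuousMap.const ℝ x'₀⟩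
    choose! Γ hΓ1 hΓ2 using hex
    set G : ℝ → X' := fun t => Γ ((max t 0 + s)/2) t with hG
    have hGp : ∀ t, 0 ≤ t → t < s → p (G t) = f t := by
      intro t h1 h2
      have hm : max t 0 = t := max_eq_left h1
      have hc1 : 0 ≤ (max t 0 + s)/2 := by rw [hm]; linarith
      have hc2 : (max t 0 + s)/2 < s := by rw [hm]; linarith
      have hc3 : t ≤ (max t 0 + s)/2 := by rw [hm]; linarith
      simp only [hG]
      rw [hΓ1 _ hc1 hc2 t, min_eq_left hc3, max_eq_left h1]
    by_cases hconst : ∃ r, 0 ≤ r ∧ r < s ∧ ∀ t, r ≤ t → t < s → f t = f s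
    · -- f is eventually constant before s : extend trivially
      obtain ⟨r, hr0, hrs, hrc⟩ := hconst
      have hu0 : 0 ≤ (r+s)/2 := by linarith
      have hus : (r+s)/2 < s := by linarith
      have hru : r ≤ (r+s)/2 := by linarith
      refine ⟨hs0.le, hs1, Γ ((r+s)/2), fun t => ?_, hΓ2 _ hu0 hus⟩
      rw [hΓ1 _ hu0 hus t]
      rcases le_or_gt t ((r+s)/2) with ht | ht
      · rw [min_eq_left ht, min_eq_left (ht.trans hus.le)]
      · have hLHS : max (min t ((r+s)/2)) 0 = (r+s)/2 := by
          rw [min_eq_right ht.le, max_eq_left hu0]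
        have h0t : 0 ≤ t := hu0.trans ht.le
        have hRHS : f (max (min t s) 0) = f s := by
          rcases le_or_gt t s with ht2 | ht2
          · rw [min_eq_left ht2, max_eq_left h0t]
            rcases eq_or_lt_of_le ht2 with he | hl
            · rw [he]
            · exact hrc t (hru.trans ht.le) hl
          · rw [min_eq_right ht2.le, max_eq_left hs0.le]
        rw [hLHS, hRHS]
        exact hrc _ hru hus
    · push_neg at hconst
      -- choose times approaching s where f differs from f s
      have hq0 : ∀ n : ℕ, 0 ≤ s - s/(n+1) := by
        intro n
        have h1 : s/((n:ℝ)+1) ≤ s := by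
          apply div_le_self hs0.le
          have : (0:ℝ) ≤ n := Nat.cast_nonneg n
          linarith
        linarith
      have hqs : ∀ n : ℕ, s - s/(n+1) < s := by
        intro n
        have : (0:ℝ) < s/((n:ℝ)+1) := by positivity
        linarith
      choose! τ hτ1 hτ2 hτ3 using fun n : ℕ => hconst (s - s/(n+1)) (hq0 n) (hqs n)
      have hτ0 : ∀ n, 0 ≤ τ n := fun n => (hq0 n).trans (hτ1 n)
      set A : Set X' := Set.range (fun n : ℕ => G (τ n)) with hA
      have hpA : ∀ n, p (G (τ n)) = f (τ n) := fun n => hGp _ (hτ0 n) (hτ2 n)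
      have hfc : f s ∈ closure (p '' A) := by
        rw [mem_closure_iff]
        intro O hO hfsO
        have hnh : f ⁻¹' O ∈ nhds s := (hO.preimage f.continuous).mem_nhds hfsO
        obtain ⟨ε, hε, hball⟩ := Metric.mem_nhds_iff.mp hnh
        obtain ⟨n, hn⟩ := exists_nat_gt (s/ε)
        have h1 : s < n * ε := (div_lt_iff₀ hε).mp hn
        have h2 : s/((n:ℝ)+1) < ε := by
          rw [div_lt_iff₀ (by positivity : (0:ℝ) < (n:ℝ)+1)]
          nlinarith
        have hfτ : f (τ n) ∈ O := by
          apply hball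
          rw [Metric.mem_ball, Real.dist_eq, abs_lt]
          have h3 := hτ1 n
          have h4 := hτ2 n
          constructor <;> linarith
        exact ⟨f (τ n), hfτ, ⟨G (τ n), ⟨n, rfl⟩, hpA n⟩⟩
      have hpD : IsClosed (p '' closure A) := hclosed _ isClosed_closure
      have hfsD : f s ∈ p '' closure A :=
        closure_minimal (Set.image_mono (f := p) subset_closure) hpD hfc
      obtain ⟨w, hwD, hpw⟩ := hfsD
      have hwA : w ∉ A := by
        rintro ⟨n, hn⟩
        apply hτ3 n
        rw [← hpA n]
        rw [show G (τ n) = w from hn]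
        exact hpw
      have hwtail : ∀ N : ℕ, w ∈ closure ((fun n : ℕ => G (τ n)) '' Set.Ici N) := by
        intro N
        have hsplit : A = (fun n : ℕ => G (τ n)) '' Set.Iio N ∪
            (fun n : ℕ => G (τ n)) '' Set.Ici N := by
          rw [hA, ← Set.image_univ, ← Set.Iio_union_Ici (a := N), Set.image_union]
        have hfinite : ((fun n : ℕ => G (τ n)) '' Set.Iio N).Finite :=
          (Set.finite_Iio N).image _
        have hwcl : w ∈ closure A := hwD
        rw [hsplit, closure_union, hfinite.isClosed.closure_eq] at hwcl
        rcases hwcl with h | h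
        · exact absurd (hsplit ▸ Set.mem_union_left _ h) hwA
        · exact h
      obtain ⟨e, hwe, hpe⟩ := hp w
      have hfst : f s ∈ e.target := by rw [← hpw, hpe]; exact e.map_source hwe
      have hnhds : f ⁻¹' e.target ∈ nhds s := (e.open_target.preimage f.continuous).mem_nhds hfst
      obtain ⟨ε, hε, hball⟩ := Metric.mem_nhds_iff.mp hnhds
      set t₀ := max 0 (s - ε/2) with ht₀def
      have ht₀0 : 0 ≤ t₀ := le_max_left _ _
      have ht₀s : t₀ < s := max_lt hs0 (by linarith)
      have hIcc : ∀ t, t₀ ≤ t → t ≤ s → f t ∈ e.target := by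
        intro t h1 h2
        apply hball
        rw [Metric.mem_ball, Real.dist_eq, abs_lt]
        have h3 : s - ε/2 ≤ t := le_trans (le_max_right _ _) h1
        constructor <;> linarith
      obtain ⟨N, hN⟩ := exists_nat_gt (s/(s - t₀))
      have hτN : ∀ n, N ≤ n → t₀ ≤ τ n := by
        intro n hn
        have h1 : s/(s-t₀) < (n:ℝ) + 1 := by
          have h2 : (N:ℝ) ≤ n := Nat.cast_le.mpr hn
          linarith
        have h2 : s/((n:ℝ)+1) < s - t₀ := by
          rw [div_lt_iff₀ (by positivity : (0:ℝ) < (n:ℝ)+1)]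
          rw [div_lt_iff₀ (by linarith : (0:ℝ) < s - t₀)] at h1
          nlinarith
        have h3 := hτ1 n
        linarith
      obtain ⟨z, hz⟩ := mem_closure_iff.mp (hwtail N) e.source e.open_source hwe
      obtain ⟨hz1, n, hnN, hzn⟩ := hz
      have hGt₁ : G (τ n) ∈ e.source := by
        rw [show G (τ n) = z from hzn]; exact hz1
      set t₁ := τ n with ht₁def
      have ht₁0 : 0 ≤ t₁ := hτ0 n
      have ht₁s : t₁ < s := hτ2 n
      have ht₁t₀ : t₀ ≤ t₁ := hτN n hnN
      have hc₁0 : 0 ≤ (t₁+s)/2 := by linarith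
      have hc₁s : (t₁+s)/2 < s := by linarith
      have ht₁c : t₁ ≤ (t₁+s)/2 := by linarith
      set γ := Γ ((t₁+s)/2) with hγdef
      have hGeq : G t₁ = γ t₁ := by
        simp only [hG, hγdef]
        rw [max_eq_left ht₁0]
      have hγp : ∀ t, p (γ t) = f (max (min t ((t₁+s)/2)) 0) := hΓ1 _ hc₁0 hc₁s
      have hγ0 : γ 0 = x'₀ := hΓ2 _ hc₁0 hc₁s
      set clamp : ℝ → ℝ := fun t => min (max t t₁) s with hclampdef
      have hclampc : Continuous clamp := (continuous_id.max continuous_const).min continuous_const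
      have hclamp1 : ∀ t, t₀ ≤ clamp t :=
        fun t => le_min (ht₁t₀.trans (le_max_right t t₁)) ht₀s.le
      have hclamp2 : ∀ t, clamp t ≤ s := fun t => min_le_right _ _
      have hmemT : ∀ t, f (clamp t) ∈ e.target := fun t => hIcc _ (hclamp1 t) (hclamp2 t)
      have hbr : Continuous fun t => e.symm (f (clamp t)) :=
        e.continuousOn_symm.comp_continuous (f.continuous.comp hclampc) hmemT
      have hmatch : ∀ t : ℝ, t = t₁ → γ t = e.symm (f (clamp t)) := by
        intro t ht
        rw [ht]
        have h1 : clamp t₁ = t₁ := by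
          simp only [hclampdef]; rw [max_self, min_eq_left ht₁s.le]
        have h2 : p (G t₁) = f t₁ := hGp t₁ ht₁0 ht₁s
        rw [h1, ← h2, hpe, e.left_inv hGt₁]
        exact hGeq.symm
      refine ⟨hs0.le, hs1, ⟨fun t => if t ≤ t₁ then γ t else e.symm (f (clamp t)),
        Continuous.if_le γ.continuous hbr continuous_id continuous_const hmatch⟩,
        fun t => ?_, ?_⟩
      · simp only [ContinuousMap.coe_mk]
        by_cases ht : t ≤ t₁
        · rw [if_pos ht, hγp t, min_eq_left (ht.trans ht₁c), min_eq_left (ht.trans ht₁s.le)]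
        · rw [if_neg ht]
          push_neg at ht
          have hcl : clamp t = min t s := by
            simp only [hclampdef]; rw [max_eq_left ht.le]
          have h2 : p (e.symm (f (clamp t))) = f (clamp t) := by
            rw [hpe]; exact e.right_inv (hmemT t)
          rw [h2, hcl, max_eq_left (le_min (ht₁0.trans ht.le) hs0.le)]
      · simp only [ContinuousMap.coe_mk]
        rw [if_pos ht₁0, hγ0]
  -- assemble via the supremum
  have hne : S.Nonempty := ⟨0, h0S⟩
  have hbdd : BddAbove S := ⟨1, fun x hx => hx.2.1⟩
  have hc0 : 0 ≤ sSup S := le_csSup hbdd h0S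
  have hc1 : sSup S ≤ 1 := csSup_le hne fun x hx => hx.2.1
  have hcS : sSup S ∈ S := by
    rcases eq_or_lt_of_le hc0 with h | h
    · rw [← h]; exact h0S
    · refine hclosedstep _ h hc1 fun t ht0 htc => ?_
      obtain ⟨s', hs'S, hts'⟩ := exists_lt_of_lt_csSup hne htc
      exact hdown s' hs'S t ht0 hts'.le
  have hceq : sSup S = 1 := by
    by_contra hne1
    obtain ⟨s', hs'S, hlt⟩ := hopenstep _ hcS (lt_of_le_of_ne hc1 hne1)
    exact absurd (le_csSup hbdd hs'S) (not_le.mpr hlt)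
  rw [hceq] at hcS
  exact hcS.2.2

end Aux

/-- a closed local homeomorphism from a Hausdorff space onto a
space `X` has the path lifting and unique path lifting properties, i.e. it is
a semicovering map. -/
theorem stmt_7 {X' X : Type*} [TopologicalSpace X'] [TopologicalSpace X]
    [T2Space X'] (p : X' → X) (hp : IsLocalHomeomorph p)
    (hclosed : IsClosedMap p) (hsurj : Function.Surjective p) :
    PathLifting p ∧ UniquePathLifting p := by
  constructor
  · intro f x'₀ h0
    set F : C(ℝ, X) := f.comp ⟨fun t => Set.projIcc 0 1 zero_le_one t, continuous_projIcc⟩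
      with hF
    have hF0 : F 0 = f 0 := by
      simp only [hF, ContinuousMap.comp_apply, ContinuousMap.coe_mk, Set.projIcc_left]
      rfl
    obtain ⟨g, hg, hg0⟩ := key_lift hp hclosed F x'₀ (by rw [hF0]; exact h0)
    refine ⟨g.comp ⟨fun t : I => (t : ℝ), continuous_subtype_val⟩, fun t => ?_, ?_⟩
    · simp only [ContinuousMap.comp_apply, ContinuousMap.coe_mk]
      rw [hg (t : ℝ), min_eq_left t.2.2, max_eq_left t.2.1]
      simp only [hF, ContinuousMap.comp_apply, ContinuousMap.coe_mk]
      congr 1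
      exact Set.projIcc_val zero_le_one t
    · simp only [ContinuousMap.comp_apply, ContinuousMap.coe_mk]
      rw [show ((0 : I) : ℝ) = (0:ℝ) from rfl]
      exact hg0
  · intro g₁ g₂ hcomp h0
    ext t
    exact loc_eq_aux hp g₁.continuous g₂.continuous hcomp h0 t
end

section
/- Every proper local homeomorphism p from a Hausdorff space X̃ onto a Hausdorff space X is a closed map; consequently p has the path lifting and unique path lifting properties (i.e., p is a semicovering map). -/
open unitInterval

/-- Every point of the base of a proper local homeomorphism has a neighborhood `V`
admitting a continuous section through any point of `p ⁻¹' V`. -/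
lemma aux_evenly {X' X : Type*} [TopologicalSpace X'] [TopologicalSpace X]
    (p : X' → X) (hp : IsLocalHomeomorph p) (hproper : IsProperMap p) (x : X) :
    ∃ V : Set X, IsOpen V ∧ x ∈ V ∧ ∀ x' : X', p x' ∈ V →
      ∃ sig : X → X', ContinuousOn sig V ∧ sig (p x') = x' ∧ ∀ v ∈ V, p (sig v) = v := by
  classical
  have hF : IsCompact (p ⁻¹' {x}) := hproper.isCompact_preimage isCompact_singleton
  choose e he₁ he₂ using hp
  obtain ⟨F₀, hsub, hfin, hcover⟩ :=
    hF.elim_finite_subcover_image (fun y (_ : y ∈ p ⁻¹' {x}) => (e y).open_source)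
      (fun y hy => Set.mem_biUnion hy (he₁ y))
  set W : Set X' := ⋃ y ∈ F₀, (e y).source with hW
  have hWopen : IsOpen W := isOpen_biUnion fun y _ => (e y).open_source
  have hclosed : IsClosed (p '' Wᶜ) := hproper.isClosedMap _ hWopen.isClosed_compl
  refine ⟨(⋂ y ∈ F₀, (e y).target) \ p '' Wᶜ,
    ((hfin.isOpen_biInter fun y _ => (e y).open_target).sdiff hclosed), ⟨?_, ?_⟩, ?_⟩
  · refine Set.mem_biInter fun y hy => ?_
    have hyx : p y = x := hsub hy
    have : (e y) y ∈ (e y).target := (e y).map_source (he₁ y)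
    rwa [← he₂ y, hyx] at this
  · rintro ⟨z, hz, hpz⟩
    exact hz (hcover (show z ∈ p ⁻¹' {x} from hpz))
  · rintro x' ⟨hx'₁, hx'₂⟩
    have hx'W : x' ∈ W := by
      by_contra h
      exact hx'₂ ⟨x', h, rfl⟩
    rw [hW, Set.mem_iUnion₂] at hx'W
    obtain ⟨y, hy, hx'src⟩ := hx'W
    have hVsub : (⋂ y ∈ F₀, (e y).target) \ p '' Wᶜ ⊆ (e y).target := fun v hv =>
      Set.mem_iInter₂.mp hv.1 y hy
    refine ⟨(e y).symm, (e y).continuousOn_symm.mono hVsub, ?_, ?_⟩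
    · rw [show p x' = (e y) x' from congrFun (he₂ y) x']
      exact (e y).left_inv hx'src
    · intro v hv
      have hvt : v ∈ (e y).target := hVsub hv
      rw [show p ((e y).symm v) = (e y) ((e y).symm v) from
        congrFun (he₂ y) _]
      exact (e y).right_inv hvt

lemma aux_pathLifting {X' X : Type*} [TopologicalSpace X'] [TopologicalSpace X]
    (p : X' → X) (hp : IsLocalHomeomorph p) (hproper : IsProperMap p) :
    PathLifting p := by
  classical
  intro f x'₀ h0
  set S : Set ℝ := {r | ∃ _ : r ∈ I, ∃ g : C(I, X'),
    g 0 = x'₀ ∧ ∀ u : I, (u : ℝ) ≤ r → p (g u) = f u} with hS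
  have h0S : (0 : ℝ) ∈ S := by
    refine ⟨⟨le_refl 0, zero_le_one⟩, ContinuousMap.const _ x'₀, rfl, fun u hu => ?_⟩
    have : u = 0 := Subtype.ext (le_antisymm hu u.2.1)
    rw [this]; exact h0
  have hbdd : BddAbove S := ⟨1, fun r hr => hr.1.2⟩
  set s₀ := sSup S with hs₀
  have hs₀mem : s₀ ∈ I := ⟨le_csSup hbdd h0S, csSup_le ⟨0, h0S⟩ fun r hr => hr.1.2⟩
  set s₀I : I := ⟨s₀, hs₀mem⟩ with hs₀I
  obtain ⟨V, hVopen, hxV, hsec⟩ := aux_evenly p hp hproper (f s₀I)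
  have hmem : f ⁻¹' V ∈ nhds s₀I := (hVopen.preimage f.continuous).mem_nhds hxV
  obtain ⟨ε, hε, hball⟩ := Metric.mem_nhds_iff.mp hmem
  have key : ∀ u : I, |(u : ℝ) - s₀| < ε → f u ∈ V := fun u hu =>
    hball (by rw [Metric.mem_ball, Subtype.dist_eq, Real.dist_eq]; exact hu)
  obtain ⟨t, htS, htlt⟩ := exists_lt_of_lt_csSup ⟨0, h0S⟩ (show s₀ - ε < s₀ by linarith)
  have htle : t ≤ s₀ := le_csSup hbdd htS
  obtain ⟨htI, g, hg0, hgl⟩ := htS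
  set t' : ℝ := min 1 (s₀ + ε / 2) with ht'
  have ht'I : t' ∈ I := ⟨le_min zero_le_one (by linarith [hs₀mem.1]), min_le_left _ _⟩
  have ht's : t' ≤ s₀ + ε / 2 := min_le_right _ _
  have htt' : t ≤ t' := le_min htI.2 (by linarith)
  set tI : I := ⟨t, htI⟩ with htI'
  set t'I : I := ⟨t', ht'I⟩ with ht'I'
  have hftV : f tI ∈ V := key tI (abs_lt.mpr ⟨by show -ε < t - s₀; linarith, by show t - s₀ < ε; linarith⟩)
  obtain ⟨sig, hsigcont, hsigpt, hsigsec⟩ := hsec (g tI) (by rw [hgl tI le_rfl]; exact hftV)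
  set c : I → I := fun u => ⟨min (max (u : ℝ) t) t',
    ⟨le_min (le_trans u.2.1 (le_max_left _ _)) ht'I.1, le_trans (min_le_right _ _) ht'I.2⟩⟩
    with hc
  have hccont : Continuous c :=
    Continuous.subtype_mk ((continuous_subtype_val.max continuous_const).min continuous_const) _
  have hcV : ∀ u : I, f (c u) ∈ V := by
    intro u
    have hv1 : t ≤ ((c u : I) : ℝ) := le_min (le_max_right _ _) htt'
    have hv2 : ((c u : I) : ℝ) ≤ s₀ + ε / 2 := le_trans (min_le_right _ _) ht's
    exact key _ (abs_lt.mpr ⟨by linarith, by linarith⟩)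
  have hcu : ∀ u : I, t ≤ (u : ℝ) → (u : ℝ) ≤ t' → c u = u := by
    intro u h₁ h₂
    apply Subtype.ext
    show min (max (u : ℝ) t) t' = u
    rw [max_eq_left h₁, min_eq_left h₂]
  set h : I → X' := fun u => if (u : ℝ) ≤ t then g u else sig (f (c u)) with hh
  have hsigf : Continuous fun u => sig (f (c u)) :=
    hsigcont.comp_continuous (f.continuous.comp hccont) hcV
  have hbound : ∀ u : I, (u : ℝ) = t → g u = sig (f (c u)) := by
    intro u hu
    have hut : u = tI := Subtype.ext hu
    have hct : c u = tI := by
      apply Subtype.ext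
      show min (max (u : ℝ) t) t' = t
      rw [hu, max_self, min_eq_left htt']
    rw [hct, hut, ← hgl tI le_rfl, hsigpt]
  have hhcont : Continuous h :=
    Continuous.if_le g.continuous hsigf continuous_subtype_val continuous_const hbound
  have ht'S : t' ∈ S := by
    refine ⟨ht'I, ⟨h, hhcont⟩, ?_, ?_⟩
    · show h 0 = x'₀
      rw [hh]
      simp only [ContinuousMap.coe_mk]
      rw [if_pos (show ((0 : I) : ℝ) ≤ t from htI.1)]
      exact hg0
    · intro u hu
      show p (h u) = f u
      rw [hh]
      by_cases hut : (u : ℝ) ≤ t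
      · simp only [if_pos hut]
        exact hgl u hut
      · simp only [if_neg hut]
        rw [hcu u (le_of_not_ge hut) hu]
        exact hsigsec (f u) (by have := hcV u; rwa [hcu u (le_of_not_ge hut) hu] at this)
  have ht'le : t' ≤ s₀ := le_csSup hbdd ht'S
  have hs₀1 : s₀ = 1 := by
    by_contra hne
    have h1 : s₀ < 1 := lt_of_le_of_ne hs₀mem.2 hne
    have : s₀ < t' := lt_min h1 (by linarith)
    linarith
  have h1S : (1 : ℝ) ∈ S := by
    have : t' = 1 := by rw [ht', hs₀1]; exact min_eq_left (by linarith)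
    rwa [this] at ht'S
  obtain ⟨_, g₁, hg₁0, hg₁⟩ := h1S
  exact ⟨g₁, fun u => hg₁ u u.2.2, hg₁0⟩

/-- a proper local homeomorphism from a Hausdorff space onto a
Hausdorff space is a closed map, and has the path lifting and unique path
lifting properties (it is a semicovering map). -/
theorem stmt_8 {X' X : Type*} [TopologicalSpace X'] [TopologicalSpace X]
    [T2Space X'] [T2Space X] (p : X' → X) (hp : IsLocalHomeomorph p)
    (hproper : IsProperMap p) (hsurj : Function.Surjective p) :
    IsClosedMap p ∧ PathLifting p ∧ UniquePathLifting p := by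
  refine ⟨hproper.isClosedMap, aux_pathLifting p hp hproper, ?_⟩
  intro g₁ g₂ hc h0
  have := IsSeparatedMap.eq_of_comp_eq (T2Space.isSeparatedMap p) hp.isLocallyInjective
    g₁.continuous g₂.continuous (funext hc) 0 h0
  exact ContinuousMap.ext (congrFun this)
end

section
/- Let p : (X̃, x̃₀) → (X, x₀) be a semicovering map with X locally path connected, and suppose the index [π₁(X, x₀) : p₊(π₁(X̃, x̃₀))] is finite. Then p is a covering map. -/
open unitInterval Set

attribute [local instance] Path.Homotopic.setoid

noncomputable section SemicovAux

/-- affine map of `I` onto `[τ, τ']`. -/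
def segMap (τ τ' : I) : C(I, I) :=
  ⟨fun u => ⟨(1 - u.1) * τ.1 + u.1 * τ'.1, by
      constructor
      · have h1 := u.2.1; have h2 := u.2.2; have := τ.2.1; have := τ'.2.1
        nlinarith
      · have h1 := u.2.1; have h2 := u.2.2; have := τ.2.2; have := τ'.2.2
        nlinarith⟩, by
    apply Continuous.subtype_mk
    fun_prop⟩

@[simp] lemma segMap_zero (τ τ' : I) : segMap τ τ' 0 = τ := by
  simp [segMap, Subtype.ext_iff]

@[simp] lemma segMap_one (τ τ' : I) : segMap τ τ' 1 = τ' := by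
  simp [segMap, Subtype.ext_iff]

lemma segMap_mem (τ τ' : I) (h : τ ≤ τ') (u : I) : segMap τ τ' u ∈ Icc τ τ' := by
  have h1 := u.2.1; have h2 := u.2.2
  have h' : τ.1 ≤ τ'.1 := h
  constructor
  · show τ.1 ≤ (1 - u.1) * τ.1 + u.1 * τ'.1
    nlinarith
  · show (1 - u.1) * τ.1 + u.1 * τ'.1 ≤ τ'.1
    nlinarith

variable {X' X : Type*} [TopologicalSpace X'] [TopologicalSpace X] {p : X' → X}

/-- fibers of a local homeomorphism are discrete. -/
lemma discrete_fiber (hp : IsLocalHomeomorph p) (b : X) :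
    DiscreteTopology (p ⁻¹' {b}) := by
  rw [discreteTopology_iff_isOpen_singleton]
  rintro ⟨y, hy⟩
  obtain ⟨e, hy_src, hpe⟩ := hp y
  have : (Subtype.val ⁻¹' e.source : Set (p ⁻¹' {b})) = {⟨y, hy⟩} := by
    ext ⟨z, hz⟩
    simp only [mem_preimage, mem_singleton_iff, Subtype.ext_iff]
    constructor
    · intro hzs
      apply e.injOn hzs hy_src
      rw [← hpe]
      exact hz.trans hy.symm
    · rintro rfl; exact hy_src
  rw [← this]
  exact isOpen_induced e.open_source

section lifts

variable (hupl : UniquePathLifting p)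

/-- one chart-step of the continuity induction. -/
lemma step_continuousAt (hupl : UniquePathLifting p)
    (h : C(I, C(I, X))) (L : I → C(I, X')) (hL : ∀ s t, p (L s t) = h s t)
    (s₀ τ τ' : I) (hle : τ ≤ τ')
    (e : OpenPartialHomeomorph X' X) (hpe : p = ⇑e)
    (hcov : ∀ t ∈ Icc τ τ', L s₀ t ∈ e.source)
    (hQ : ContinuousAt (fun s => L s τ) s₀) :
    ContinuousAt (fun s => L s τ') s₀ := by
  have hτmem : τ ∈ Icc τ τ' := ⟨le_refl τ, hle⟩
  -- the neighborhood W of s₀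
  have hW₁ : (fun s => L s τ) ⁻¹' e.source ∈ nhds s₀ :=
    hQ.preimage_mem_nhds (e.open_source.mem_nhds (hcov τ hτmem))
  have hW₂ : {s : I | MapsTo (h s) (Icc τ τ') e.target} ∈ nhds s₀ := by
    have hopen : IsOpen {g : C(I, X) | MapsTo g (Icc τ τ') e.target} :=
      ContinuousMap.isOpen_setOf_mapsTo (isClosed_Icc.isCompact) e.open_target
    have hc : ContinuousAt h s₀ := h.continuous.continuousAt
    have hmem : h s₀ ∈ {g : C(I, X) | MapsTo g (Icc τ τ') e.target} := by
      intro t ht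
      have het : h s₀ t = e (L s₀ t) := by rw [← hL s₀ t, hpe]
      rw [het]
      exact e.map_source (hcov t ht)
    exact hc.preimage_mem_nhds (hopen.mem_nhds hmem)
  -- on W, L s τ' = e.symm (h s τ')
  have key : ∀ s, L s τ ∈ e.source → MapsTo (h s) (Icc τ τ') e.target →
      L s τ' = e.symm (h s τ') := by
    intro s hs₁ hs₂
    have hmem : ∀ u, h s (segMap τ τ' u) ∈ e.target := fun u => hs₂ (segMap_mem τ τ' hle u)
    let g₁ : C(I, X') := (L s).comp (segMap τ τ')
    let g₂ : C(I, X') := ⟨fun u => e.symm (h s (segMap τ τ' u)), by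
      apply e.continuousOn_symm.comp_continuous
        ((h s).continuous.comp (segMap τ τ').continuous) hmem⟩
    have hg : g₁ = g₂ := by
      apply hupl
      · intro u
        show p (L s (segMap τ τ' u)) = p (e.symm (h s (segMap τ τ' u)))
        rw [hL s (segMap τ τ' u), hpe, e.right_inv (hmem u)]
      · show L s (segMap τ τ' 0) = e.symm (h s (segMap τ τ' 0))
        rw [segMap_zero]
        have he : h s τ = e (L s τ) := by rw [← hL s τ, hpe]
        rw [he, e.left_inv hs₁]
    have hg1 := congrArg (fun g : C(I, X') => g 1) hg
    simpa [g₁, g₂, segMap_one] using hg1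
  have hEq : (fun s => L s τ') =ᶠ[nhds s₀] fun s => e.symm (h s τ') := by
    filter_upwards [hW₁, hW₂] with s hs₁ hs₂
    exact key s hs₁ hs₂
  have hcont : ContinuousAt (fun s => e.symm (h s τ')) s₀ := by
    have h1 : ContinuousAt (fun s => h s τ') s₀ :=
      ((continuous_eval_const τ').comp h.continuous).continuousAt
    have h2 : ContinuousAt (⇑e.symm) (h s₀ τ') := by
      apply e.continuousAt_symm
      have he : h s₀ τ' = e (L s₀ τ') := by rw [← hL s₀ τ', hpe]
      rw [he]
      exact e.map_source (hcov τ' ⟨hle, le_refl τ'⟩)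
    have h3 := ContinuousAt.comp (f := fun s => h s τ') (g := ⇑e.symm) h2 h1
    exact h3
  exact hcont.congr hEq.symm

/-- continuity of the endpoints of a family of lifts. -/
lemma endpoint_continuous (hp : IsLocalHomeomorph p) (hupl : UniquePathLifting p)
    (h : C(I, C(I, X))) (L : I → C(I, X')) (hL : ∀ s t, p (L s t) = h s t)
    {x'a : X'} (hL0 : ∀ s, L s 0 = x'a) (s₀ : I) :
    ContinuousAt (fun s => L s 1) s₀ := by
  classical
  set T : Set ℝ := {r | ∃ hr : r ∈ Icc (0:ℝ) 1, ContinuousAt (fun s => L s ⟨r, hr⟩) s₀} with hT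
  have hQ0 : ContinuousAt (fun s => L s 0) s₀ := by
    have heq : (fun s => L s 0) = fun _ => x'a := funext hL0
    rw [heq]; exact continuousAt_const
  have hT0 : (0:ℝ) ∈ T := ⟨⟨le_refl 0, zero_le_one⟩, hQ0⟩
  have hTne : T.Nonempty := ⟨0, hT0⟩
  have hTbdd : BddAbove T := ⟨1, fun r hr => hr.1.2⟩
  set r₁ : ℝ := sSup T with hr₁
  have hub : r₁ ∈ Icc (0:ℝ) 1 := ⟨le_csSup hTbdd hT0, csSup_le hTne fun r hr => hr.1.2⟩
  set τ₁ : I := ⟨r₁, hub⟩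
  obtain ⟨e, hsrc, hpe⟩ := hp (L s₀ τ₁)
  -- a metric neighborhood of τ₁ inside the chart preimage
  have hpre : (L s₀) ⁻¹' e.source ∈ nhds τ₁ :=
    (L s₀).continuous.continuousAt.preimage_mem_nhds (e.open_source.mem_nhds hsrc)
  obtain ⟨ε, hε, hball⟩ := Metric.mem_nhds_iff.mp hpre
  -- pick r ∈ T with r > r₁ - ε/2
  obtain ⟨r, hrT, hrlt⟩ := exists_lt_of_lt_csSup hTne (by linarith : r₁ - ε/2 < r₁)
  obtain ⟨hrI, hQr⟩ := hrT
  have hrle : r ≤ r₁ := le_csSup hTbdd ⟨hrI, hQr⟩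
  set r' : ℝ := min (r₁ + ε/2) 1 with hr'
  have hr'I : r' ∈ Icc (0:ℝ) 1 :=
    ⟨le_min (by linarith [hub.1]) zero_le_one, min_le_right _ _⟩
  set τ : I := ⟨r, hrI⟩
  set τ' : I := ⟨r', hr'I⟩
  have hle : τ ≤ τ' := by
    show r ≤ r'
    exact le_min (by linarith [hub.2]) (hrI.2)
  have hcov : ∀ t ∈ Icc τ τ', L s₀ t ∈ e.source := by
    intro t ht
    apply hball
    rw [Metric.mem_ball, Subtype.dist_eq, Real.dist_eq, abs_lt]
    have h1 : r ≤ t.1 := ht.1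
    have h2 : t.1 ≤ r' := ht.2
    have h3 : r' ≤ r₁ + ε/2 := min_le_left _ _
    constructor <;> simp only [τ₁] <;> linarith
  have hQτ' : ContinuousAt (fun s => L s τ') s₀ :=
    step_continuousAt hupl h L hL s₀ τ τ' hle e hpe hcov hQr
  have hr'T : r' ∈ T := ⟨hr'I, hQτ'⟩
  have hler : r' ≤ r₁ := le_csSup hTbdd hr'T
  have h1r : r₁ = 1 := by
    by_contra hne
    have hlt : r₁ < 1 := lt_of_le_of_ne hub.2 hne
    rcases le_or_gt (r₁ + ε/2) 1 with hc | hc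
    · have hmin : r' = r₁ + ε/2 := min_eq_left hc
      rw [hmin] at hler; linarith
    · have hmin : r' = 1 := min_eq_right (le_of_lt hc)
      rw [hmin] at hler; linarith
  have hr'1 : r' = 1 := by
    rw [hr', h1r]
    exact min_eq_right (by linarith)
  have hτ'1 : τ' = (1 : I) := Subtype.ext hr'1
  rwa [hτ'1] at hQτ'

/-- Monodromy: homotopic paths have lifts with the same endpoints. -/
lemma monodromy (hp : IsLocalHomeomorph p) (hpl : PathLifting p)
    (hupl : UniquePathLifting p) {a b : X} {γ₀ γ₁ : Path a b}
    (hhom : Path.Homotopic γ₀ γ₁) (g₀ g₁ : C(I, X'))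
    (hg₀ : ∀ t, p (g₀ t) = γ₀ t) (hg₁ : ∀ t, p (g₁ t) = γ₁ t)
    (h00 : g₀ 0 = g₁ 0) : g₀ 1 = g₁ 1 := by
  classical
  obtain ⟨F⟩ := hhom
  set h : C(I, C(I, X)) := F.toContinuousMap.curry with hh
  have hs0 : ∀ s, h s 0 = a := by
    intro s
    have := F.eq_fst s (show (0:I) ∈ ({0,1} : Set I) by simp)
    simpa [hh] using this
  have hs1 : ∀ s, h s 1 = b := by
    intro s
    have := F.eq_fst s (show (1:I) ∈ ({0,1} : Set I) by simp)
    simpa [hh] using this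
  have hpa : p (g₀ 0) = a := by rw [hg₀ 0, γ₀.source]
  have hlift : ∀ s : I, ∃ g : C(I, X'), (∀ t, p (g t) = h s t) ∧ g 0 = g₀ 0 :=
    fun s => hpl (h s) (g₀ 0) (by rw [hpa, hs0 s])
  set L : I → C(I, X') := fun s => (hlift s).choose with hLdef
  have hL : ∀ s t, p (L s t) = h s t := fun s => (hlift s).choose_spec.1
  have hL0 : ∀ s, L s 0 = g₀ 0 := fun s => (hlift s).choose_spec.2
  -- endpoints are a continuous map into the discrete fiber over b
  have hcont : Continuous fun s => L s 1 :=
    continuous_iff_continuousAt.mpr fun s₀ => endpoint_continuous hp hupl h L hL hL0 s₀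
  haveI := discrete_fiber hp b
  set f : I → ↥(p ⁻¹' {b}) := fun s => ⟨L s 1, by
    rw [mem_preimage, mem_singleton_iff, hL s 1, hs1 s]⟩ with hf
  have hfc : Continuous f := hcont.subtype_mk _
  have hconst : f 0 = f 1 :=
    ((IsLocallyConstant.iff_continuous f).mpr hfc).apply_eq_of_preconnectedSpace 0 1
  have hL01 : L 0 1 = L 1 1 := congrArg Subtype.val hconst
  -- identify L 0 with g₀ and L 1 with g₁
  have hL0g : L 0 = g₀ := by
    apply hupl
    · intro t
      rw [hL 0 t, hg₀ t]
      simp [hh]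
    · rw [hL0 0]
  have hL1g : L 1 = g₁ := by
    apply hupl
    · intro t
      rw [hL 1 t, hg₁ t]
      simp [hh]
    · rw [hL0 1, h00]
  rw [← hL0g, ← hL1g, hL01]

/-- reversal of continuous paths. -/
def revMap : C(I, I) := ⟨unitInterval.symm, unitInterval.continuous_symm⟩

/-- Lifting a fixed path gives an injection between fibers. -/
lemma fiber_inj (hpl : PathLifting p) (hupl : UniquePathLifting p)
    {a b : X} (δ : Path a b) :
    ∃ φ : ↥(p ⁻¹' {a}) → ↥(p ⁻¹' {b}), Function.Injective φ := by
  classical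
  have hlift : ∀ y : ↥(p ⁻¹' {a}), ∃ g : C(I, X'),
      (∀ t, p (g t) = δ t) ∧ g 0 = y.1 :=
    fun y => hpl δ.toContinuousMap y.1 (by rw [y.2.out]; simp)
  refine ⟨fun y => ⟨(hlift y).choose 1, by
    rw [mem_preimage, mem_singleton_iff, (hlift y).choose_spec.1 1]; simp⟩, ?_⟩
  intro y₁ y₂ hy
  have h1 : (hlift y₁).choose 1 = (hlift y₂).choose 1 := congrArg Subtype.val hy
  have hrev : (hlift y₁).choose.comp revMap = (hlift y₂).choose.comp revMap := by
    apply hupl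
    · intro u
      show p ((hlift y₁).choose (revMap u)) = p ((hlift y₂).choose (revMap u))
      rw [(hlift y₁).choose_spec.1, (hlift y₂).choose_spec.1]
    · show (hlift y₁).choose (revMap 0) = (hlift y₂).choose (revMap 0)
      have : revMap 0 = 1 := by simp [revMap]
      rw [this, h1]
  have := congrArg (fun g : C(I, X') => g 1) hrev
  have h0 : (hlift y₁).choose (revMap 1) = (hlift y₂).choose (revMap 1) := this
  have hrev1 : revMap 1 = 0 := by simp [revMap]
  rw [hrev1, (hlift y₁).choose_spec.2, (hlift y₂).choose_spec.2] at h0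
  exact Subtype.ext h0

/-- coercion of `trans` only depends on the coercions. -/
lemma trans_coe_congr {a b c a' b' c' : X} (γ₁ : Path a b) (γ₂ : Path b c)
    (δ₁ : Path a' b') (δ₂ : Path b' c') (h₁ : ⇑γ₁ = ⇑δ₁) (h₂ : ⇑γ₂ = ⇑δ₂) :
    ⇑(γ₁.trans γ₂) = ⇑(δ₁.trans δ₂) := by
  ext t
  rw [Path.trans_apply, Path.trans_apply]
  split
  · exact congrFun h₁ _
  · exact congrFun h₂ _

/-- construction of an evenly covered neighborhood at a point with finite fiber. -/
lemma evenly_covered_of_finite_fiber [LocallyPathConnectedSpace X]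
    (hp : IsLocalHomeomorph p) (hpl : PathLifting p) (hupl : UniquePathLifting p)
    (x : X) (hfin : Finite ↥(p ⁻¹' {x})) (hne : Nonempty ↥(p ⁻¹' {x})) :
    IsEvenlyCovered p x (↥(p ⁻¹' {x})) := by
  classical
  set F := ↥(p ⁻¹' {x})
  haveI : DiscreteTopology F := discrete_fiber hp x
  have hchart : ∀ y : F, ∃ e : OpenPartialHomeomorph X' X, y.1 ∈ e.source ∧ p = ⇑e :=
    fun y => hp y.1
  choose ch hsrc hpe using hchart
  have hpy : ∀ y : F, p y.1 = x := fun y => y.2.out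
  -- the basic open set
  set V₀ : Set X := ⋂ y : F, (ch y).target with hV₀
  have hV₀open : IsOpen V₀ := isOpen_iInter_of_finite fun y => (ch y).open_target
  have hxV₀ : x ∈ V₀ := by
    rw [hV₀, mem_iInter]
    intro y
    have : ch y y.1 ∈ (ch y).target := (ch y).map_source (hsrc y)
    rwa [← hpe y, hpy y] at this
  obtain ⟨V, ⟨hVopen, hxV, hVpc⟩, hVsub⟩ :=
    (isOpen_isPathConnected_basis x).mem_iff.mp (hV₀open.mem_nhds hxV₀)
  have hVtar : ∀ y : F, V ⊆ (ch y).target := fun y =>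
    hVsub.trans (iInter_subset (fun y : F => (ch y).target) y)
  -- sections
  set sec : F → X → X' := fun y => ⇑(ch y).symm with hsec
  have f1 : ∀ (y : F) (v : X), v ∈ V → p (sec y v) = v := by
    intro y v hv
    rw [hsec, hpe y]
    exact (ch y).right_inv (hVtar y hv)
  have f3 : ∀ (y : F) (v : X), v ∈ V → sec y v ∈ (ch y).source := by
    intro y v hv
    exact (ch y).map_target (hVtar y hv)
  have f2 : ∀ y : F, sec y x = y.1 := by
    intro y
    have hchy : ch y y.1 = x := by rw [← hpe y, hpy y]
    show (ch y).symm x = y.1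
    conv_lhs => rw [← hchy]
    exact (ch y).left_inv (hsrc y)
  -- sheets
  set S : F → Set X' := fun y => (ch y).source ∩ p ⁻¹' V with hS
  have hSopen : ∀ y : F, IsOpen (S y) :=
    fun y => (ch y).open_source.inter (hVopen.preimage hp.continuous)
  have K0 : ∀ (y : F) (z : X'), z ∈ S y → z = sec y (p z) := by
    intro y z hz
    rw [hsec, hpe y]
    exact ((ch y).left_inv hz.1).symm
  have K2 : ∀ (y₁ y₂ : F) (v : X), v ∈ V → sec y₁ v = sec y₂ v → y₁ = y₂ := by
    intro y₁ y₂ v hv heq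
    obtain ⟨γ, hγ⟩ := hVpc.joinedIn v hv x hxV
    have hcont : ∀ y : F, Continuous fun t => sec y (γ t) :=
      fun y => (ch y).continuousOn_symm.comp_continuous γ.continuous
        (fun t => hVtar y (hγ t))
    have hlifteq : ContinuousMap.mk (fun t => sec y₁ (γ t)) (hcont y₁)
        = ContinuousMap.mk (fun t => sec y₂ (γ t)) (hcont y₂) := by
      apply hupl
      · intro t
        show p (sec y₁ (γ t)) = p (sec y₂ (γ t))
        rw [f1 y₁ (γ t) (hγ t), f1 y₂ (γ t) (hγ t)]
      · show sec y₁ (γ 0) = sec y₂ (γ 0)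
        rw [γ.source, heq]
    have h1 := congrArg (fun g : C(I, X') => g 1) hlifteq
    simp only [ContinuousMap.coe_mk] at h1
    rw [γ.target, f2 y₁, f2 y₂] at h1
    exact Subtype.ext h1
  have K1 : ∀ z ∈ p ⁻¹' V, ∃ y : F, z ∈ S y := by
    intro z hz
    obtain ⟨γ, hγ⟩ := hVpc.joinedIn (p z) hz x hxV
    obtain ⟨g, hg, hg0⟩ := hpl γ.toContinuousMap z (by simp)
    set y : F := ⟨g 1, by rw [mem_preimage, mem_singleton_iff, hg 1]; simp⟩ with hy
    refine ⟨y, ?_, ?_⟩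
    · -- z ∈ (ch y).source
      have hzeq : z = sec y (p z) := by
        have hc2 : Continuous fun u => sec y (γ (revMap u)) :=
          (ch y).continuousOn_symm.comp_continuous
            (γ.continuous.comp revMap.continuous) (fun u => hVtar y (hγ (revMap u)))
        have hlifteq : g.comp revMap = ContinuousMap.mk (fun u => sec y (γ (revMap u))) hc2 := by
          apply hupl
          · intro u
            show p (g (revMap u)) = p (sec y (γ (revMap u)))
            rw [hg (revMap u), f1 y (γ (revMap u)) (hγ (revMap u))]
            rfl
          · show g (revMap 0) = sec y (γ (revMap 0))
            have hr0 : revMap 0 = 1 := by simp [revMap]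
            rw [hr0, γ.target, f2 y]
        have h1 := congrArg (fun g : C(I, X') => g 1) hlifteq
        simp only [ContinuousMap.coe_mk, ContinuousMap.comp_apply] at h1
        have hr1 : revMap 1 = 0 := by simp [revMap]
        rw [hr1, γ.source, hg0] at h1
        exact h1
      rw [hzeq]
      exact f3 y (p z) hz
    · exact hz
  haveI := hne
  set κ : X' → F := fun z => if hz : ∃ y : F, z ∈ S y then hz.choose else Classical.arbitrary F
    with hκ
  have Kval : ∀ (z : X') (y : F), z ∈ S y → κ z = y := by
    intro z y hzy
    have hex : ∃ y : F, z ∈ S y := ⟨y, hzy⟩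
    rw [hκ]
    simp only [dif_pos hex]
    have h₁ : z ∈ S hex.choose := hex.choose_spec
    have e₁ := K0 _ _ h₁
    have e₂ := K0 _ _ hzy
    exact K2 hex.choose y (p z) hzy.2 (e₁.symm.trans e₂)
  -- build the trivialization
  refine IsEvenlyCovered.of_trivialization (t := ⟨⟨⟨⟨fun z => (p z, κ z), fun q => sec q.2 q.1,
      p ⁻¹' V, V ×ˢ univ, ?_, ?_, ?_, ?_⟩, ?_, ?_⟩, ?_, ?_⟩, V, hVopen, rfl, rfl, ?_⟩) hxV
  · -- map_source
    intro z hz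
    exact ⟨hz, mem_univ _⟩
  · -- map_target
    rintro ⟨v, y⟩ ⟨hv, -⟩
    show sec y v ∈ p ⁻¹' V
    rw [mem_preimage, f1 y v hv]
    exact hv
  · -- left_inv
    intro z hz
    obtain ⟨y, hzy⟩ := K1 z hz
    show sec (κ z) (p z) = z
    rw [Kval z y hzy]
    exact (K0 y z hzy).symm
  · -- right_inv
    rintro ⟨v, y⟩ ⟨hv, -⟩
    show (p (sec y v), κ (sec y v)) = (v, y)
    have hmem : sec y v ∈ S y := ⟨f3 y v hv, by rw [mem_preimage, f1 y v hv]; exact hv⟩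
    rw [f1 y v hv, Kval _ y hmem]
  · -- continuousOn_toFun
    intro z hz
    apply ContinuousAt.continuousWithinAt
    obtain ⟨y, hzy⟩ := K1 z hz
    have hev : (fun z' => κ z') =ᶠ[nhds z] fun _ => y := by
      filter_upwards [(hSopen y).mem_nhds hzy] with z' hz'
      exact Kval z' y hz'
    exact hp.continuous.continuousAt.prodMk (continuousAt_const.congr hev.symm)
  · -- continuousOn_invFun
    rintro ⟨v, y⟩ ⟨hv, -⟩
    apply ContinuousAt.continuousWithinAt
    have hsnd : {q : X × F | q.2 = y} ∈ nhds (v, y) := by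
      have : IsOpen ({y} : Set F) := isOpen_discrete _
      have := (this.preimage (continuous_snd (X := X) (Y := F))).mem_nhds
        (by simp : (v, y) ∈ Prod.snd ⁻¹' ({y} : Set F))
      exact this
    have hev : (fun q : X × F => sec q.2 q.1) =ᶠ[nhds (v, y)] fun q => sec y q.1 := by
      filter_upwards [hsnd] with q hq
      rw [hq]
    have hc : ContinuousAt (fun q : X × F => sec y q.1) (v, y) := by
      have h2 : ContinuousAt (⇑(ch y).symm) v :=
        (ch y).continuousAt_symm (hVtar y hv)
      exact h2.comp continuousAt_fst
    exact hc.congr hev.symm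
  · -- open_source
    exact hVopen.preimage hp.continuous
  · -- open_target
    exact hVopen.prod isOpen_univ
  · -- proj_toFun
    intro z _
    rfl

end lifts

end SemicovAux

open CategoryTheory

/-- a semicovering map onto a locally path connected space whose
image subgroup `p₊(π₁(X', x'₀))` (formalized as the subgroup `H` of classes of
loops of the form `p ∘ α'`) has finite index in `π₁(X, x₀)` is a covering
map. -/
theorem stmt_15 {X' X : Type*} [TopologicalSpace X'] [TopologicalSpace X]
    [PathConnectedSpace X'] [LocallyPathConnectedSpace X]
    (p : X' → X) (hp : IsLocalHomeomorph p) (hsurj : Function.Surjective p)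
    (hpl : PathLifting p) (hupl : UniquePathLifting p)
    (x'₀ : X') (x₀ : X) (hx'₀ : p x'₀ = x₀)
    (H : Subgroup (FundamentalGroup X x₀))
    (hH : ∀ g : FundamentalGroup X x₀, g ∈ H ↔
      ∃ α' : Path x'₀ x'₀, g = FundamentalGroup.fromPath (X := TopCat.of X)
        ⟦(α'.map hp.continuous).cast hx'₀.symm hx'₀.symm⟧)
    (hfin : H.FiniteIndex) :
    IsCoveringMap p := by
  classical
  -- finiteness of the quotient
  haveI hQfin : Finite (FundamentalGroup X x₀ ⧸ H) := by
    have h1 : H.index ≠ 0 := hfin.index_ne_zero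
    have h2 : Nat.card (FundamentalGroup X x₀ ⧸ H) ≠ 0 := h1
    exact (Nat.card_ne_zero.mp h2).2
  -- the fiber over x₀ is finite
  have hfib₀ : Finite ↥(p ⁻¹' {x₀}) := by
    set P : ↥(p ⁻¹' {x₀}) → Path x₀ x₀ := fun y =>
      ((PathConnectedSpace.somePath x'₀ y.1).map hp.continuous).cast
        hx'₀.symm (y.2.out).symm with hP
    have hPcoe : ∀ y, ⇑(P y) = p ∘ ⇑(PathConnectedSpace.somePath x'₀ y.1) := by
      intro y; simp [hP, Path.cast]
    set el : ↥(p ⁻¹' {x₀}) → FundamentalGroup X x₀ := fun y =>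
      FundamentalGroup.fromPath (X := TopCat.of X) ⟦P y⟧ with hel
    set Φ : ↥(p ⁻¹' {x₀}) → FundamentalGroup X x₀ ⧸ H := fun y =>
      QuotientGroup.mk (el y) with hΦ
    have hinj : Function.Injective Φ := by
      intro y₁ y₂ hy
      have hmem : (el y₁)⁻¹ * el y₂ ∈ H := (QuotientGroup.eq).mp hy
      obtain ⟨lam, hlam⟩ := (hH _).mp hmem
      have hmul : el y₂ = el y₁ * ((el y₁)⁻¹ * el y₂) := by group
      rw [hlam] at hmul
      -- pass to path classes
      set Λ : Path x₀ x₀ := (lam.map hp.continuous).cast hx'₀.symm hx'₀.symm with hΛ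
      have hΛcoe : ⇑Λ = p ∘ ⇑lam := by simp [hΛ, Path.cast]
      have hhom : (el y₂ : Path.Homotopic.Quotient x₀ x₀)
          = Path.Homotopic.Quotient.trans ⟦Λ⟧ (el y₁) :=
        hmul
      have hclass : (⟦P y₂⟧ : Path.Homotopic.Quotient x₀ x₀) = ⟦Λ.trans (P y₁)⟧ := by
        rw [show (⟦Λ.trans (P y₁)⟧ : Path.Homotopic.Quotient x₀ x₀)
            = Path.Homotopic.Quotient.trans ⟦Λ⟧ ⟦P y₁⟧ from rfl]
        exact hhom
      have hhtp : Path.Homotopic (P y₂) (Λ.trans (P y₁)) := Quotient.exact hclass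
      -- lifts of the two homotopic paths
      set A₁ := PathConnectedSpace.somePath x'₀ y₁.1 with hA₁
      set A₂ := PathConnectedSpace.somePath x'₀ y₂.1 with hA₂
      have htranscoe : ⇑(Λ.trans (P y₁)) = ⇑((lam.trans A₁).map hp.continuous) := by
        rw [Path.map_trans]
        apply trans_coe_congr
        · rw [hΛcoe]; rfl
        · rw [hPcoe y₁]; rfl
      have hend := monodromy hp hpl hupl hhtp A₂.toContinuousMap
        (lam.trans A₁).toContinuousMap
        (fun t => (congrFun (hPcoe y₂) t).symm)
        (fun t => by
          have h1 := congrFun htranscoe t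
          rw [h1]; rfl)
        (by show A₂ 0 = (lam.trans A₁) 0; rw [A₂.source, (lam.trans A₁).source])
      have h1 : A₂ 1 = (lam.trans A₁) 1 := hend
      rw [A₂.target, (lam.trans A₁).target] at h1
      exact (Subtype.ext h1).symm
    exact Finite.of_injective Φ hinj
  -- all fibers are finite
  have hfib : ∀ x : X, Finite ↥(p ⁻¹' {x}) := by
    intro x
    obtain ⟨z, hz⟩ := hsurj x
    have hδ : ∃ δ : Path x x₀, True := by
      refine ⟨((PathConnectedSpace.somePath z x'₀).map hp.continuous).cast
        hz.symm hx'₀.symm, trivial⟩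
    obtain ⟨δ, -⟩ := hδ
    obtain ⟨φ, hφ⟩ := fiber_inj hpl hupl δ
    exact Finite.of_injective φ hφ
  -- conclusion
  intro x
  have hne : Nonempty ↥(p ⁻¹' {x}) := by
    obtain ⟨z, hz⟩ := hsurj x
    exact ⟨⟨z, by simp [hz]⟩⟩
  exact evenly_covered_of_finite_fiber hp hpl hupl x (hfib x) hne
end

section
/- Every finite sheeted semicovering map onto a locally path connected space is a covering map. -/
open unitInterval

/-- every finite sheeted semicovering map onto a locally path
connected space is a covering map. -/
theorem stmt_16 {X' X : Type*} [TopologicalSpace X'] [TopologicalSpace X]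
    [PathConnectedSpace X'] [LocallyPathConnectedSpace X]
    (p : X' → X) (hp : IsLocalHomeomorph p) (hsurj : Function.Surjective p)
    (hpl : PathLifting p) (hupl : UniquePathLifting p)
    (hfin : ∀ x : X, (p ⁻¹' {x}).Finite) :
    IsCoveringMap p := by
  intro x₀
  have hpc : Continuous p := hp.continuous
  choose e hmem hpe using hp
  set F : Set X' := p ⁻¹' {x₀} with hF
  haveI : Finite F := (hfin x₀).to_subtype
  haveI : Nonempty F := by
    obtain ⟨y, hy⟩ := hsurj x₀
    exact ⟨⟨y, hy⟩⟩
  -- key facts about charts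
  have hpe' : ∀ z : X', p z = e z z := fun z => congrFun (hpe z) z
  have hsymm : ∀ (y : X') (v : X), v ∈ (e y).target → p ((e y).symm v) = v := by
    intro y v hv
    rw [hpe y]
    exact (e y).right_inv hv
  -- the open set W
  set W : Set X := ⋂ y : F, (e ↑y).target with hW
  have hWopen : IsOpen W := isOpen_iInter_of_finite fun y => (e ↑y).open_target
  have hx₀W : x₀ ∈ W := by
    refine Set.mem_iInter.mpr fun y => ?_
    have : p ↑y = x₀ := y.2
    rw [← this, hpe' ↑y]
    exact (e ↑y).map_source (hmem ↑y)
  set V : Set X := pathComponentIn W x₀ with hV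
  have hVopen : IsOpen V := hWopen.pathComponentIn x₀
  have hx₀V : x₀ ∈ V := mem_pathComponentIn_self hx₀W
  have hVpc : IsPathConnected V := isPathConnected_pathComponentIn hx₀W
  have hVt : ∀ y : F, V ⊆ (e ↑y).target := fun y =>
    pathComponentIn_subset.trans (Set.iInter_subset _ y)
  -- reversal map
  let σc : C(I, I) := ⟨unitInterval.symm, continuous_symm⟩
  -- uniqueness of the sheet
  have UNIQ : ∀ (y z : F) (v : X), v ∈ V → (e ↑y).symm v = (e ↑z).symm v → y = z := by
    intro y z v hv hyz
    obtain ⟨γ, hγ⟩ := (hVpc.joinedIn v hv x₀ hx₀V)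
    have cy : Continuous fun t : I => (e ↑y).symm (γ t) :=
      (e ↑y).symm.continuousOn.comp_continuous γ.continuous fun t => hVt y (hγ t)
    have cz : Continuous fun t : I => (e ↑z).symm (γ t) :=
      (e ↑z).symm.continuousOn.comp_continuous γ.continuous fun t => hVt z (hγ t)
    have h := hupl ⟨_, cy⟩ ⟨_, cz⟩
      (fun t => by simp only [ContinuousMap.coe_mk]
                   rw [hsymm _ _ (hVt y (hγ t)), hsymm _ _ (hVt z (hγ t))])
      (by simp only [ContinuousMap.coe_mk]
          simpa [γ.source] using hyz)
    have h1 := DFunLike.congr_fun h 1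
    simp only [ContinuousMap.coe_mk, γ.target] at h1
    have ey : (e ↑y).symm x₀ = ↑y := by
      have : p ↑y = x₀ := y.2
      rw [← this, hpe' ↑y, (e ↑y).left_inv (hmem ↑y)]
    have ez : (e ↑z).symm x₀ = ↑z := by
      have : p ↑z = x₀ := z.2
      rw [← this, hpe' ↑z, (e ↑z).left_inv (hmem ↑z)]
    exact Subtype.ext (by rw [← ey, ← ez, h1])
  -- existence of the sheet
  have CLAIM : ∀ y' : X', p y' ∈ V → ∃ y : F, y' = (e ↑y).symm (p y') := by
    intro y' hy'
    obtain ⟨γ, hγ⟩ := (hVpc.joinedIn (p y') hy' x₀ hx₀V)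
    obtain ⟨g, hg, hg0⟩ := hpl γ.toContinuousMap y' (by simp)
    have hy : g 1 ∈ F := by
      show p (g 1) = x₀
      rw [hg 1]
      exact γ.target
    set y : F := ⟨g 1, hy⟩ with hydef
    have cδ : Continuous fun t : I => (e ↑y).symm (γ t) :=
      (e ↑y).symm.continuousOn.comp_continuous γ.continuous fun t => hVt y (hγ t)
    have ey : (e ↑y).symm x₀ = ↑y := by
      have : p ↑y = x₀ := y.2
      rw [← this, hpe' ↑y, (e ↑y).left_inv (hmem ↑y)]
    have h := hupl (g.comp σc) ((⟨_, cδ⟩ : C(I, X')).comp σc)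
      (fun t => by
        simp only [ContinuousMap.comp_apply, ContinuousMap.coe_mk]
        rw [hg, hsymm _ _ (hVt y (hγ _))]
        rfl)
      (by
        simp only [ContinuousMap.comp_apply, ContinuousMap.coe_mk, σc]
        rw [unitInterval.symm_zero]
        simp [γ.target, ey]
        rfl)
    have h1 := DFunLike.congr_fun h 1
    simp only [ContinuousMap.comp_apply, ContinuousMap.coe_mk, σc] at h1
    rw [unitInterval.symm_one] at h1
    refine ⟨y, ?_⟩
    calc y' = g 0 := hg0.symm
      _ = (e (g 1)).symm (γ 0) := h1
      _ = (e ↑y).symm (p y') := by rw [γ.source]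
  -- the index map
  have idx0 : ∀ y' : X', ∃ y : F, p y' ∈ V → y' = (e ↑y).symm (p y') := by
    intro y'
    by_cases h : p y' ∈ V
    · obtain ⟨y, hy⟩ := CLAIM y' h
      exact ⟨y, fun _ => hy⟩
    · exact ⟨Classical.arbitrary F, fun hc => absurd hc h⟩
  choose idx hidx using idx0
  -- y' lies in the source of its own chart
  have hsrc : ∀ y' : X', p y' ∈ V → y' ∈ (e ↑(idx y')).source := by
    intro y' h
    have := (e ↑(idx y')).map_target (hVt (idx y') h)
    rwa [← hidx y' h] at this
  -- idx is determined
  have idx_eq : ∀ (y' : X') (y : F), p y' ∈ V → y' = (e ↑y).symm (p y') → idx y' = y := by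
    intro y' y h hy
    refine UNIQ (idx y') y (p y') h ?_
    rw [← hidx y' h, ← hy]
  -- local constancy of idx
  have idx_const : ∀ y' z : X', p y' ∈ V → p z ∈ V → z ∈ (e ↑(idx y')).source →
      idx z = idx y' := by
    intro y' z h hz hzs
    refine idx_eq z (idx y') hz ?_
    conv_lhs => rw [← (e _).left_inv hzs]
    rw [← hpe ↑(idx y')]
  -- discreteness of the fiber
  haveI hdisc : DiscreteTopology F := by
    rw [discreteTopology_iff_isOpen_singleton]
    intro y
    have hset : ({y} : Set F) = (Subtype.val ⁻¹' (e ↑y).source : Set F) := by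
      ext z
      simp only [Set.mem_singleton_iff, Set.mem_preimage]
      constructor
      · intro h; exact h ▸ hmem ↑y
      · intro hz
        have hpz : p ↑z = x₀ := z.2
        have hpy : p ↑y = x₀ := y.2
        have := (e ↑y).injOn hz (hmem ↑y)
          (by rw [← hpe ↑y]; show p ↑z = p ↑y; rw [hpz, hpy])
        exact Subtype.ext this
    rw [hset]
    exact (e ↑y).open_source.preimage continuous_subtype_val
  -- the trivialization
  refine IsEvenlyCovered.of_trivialization (t := {
      toFun := fun y' => (p y', idx y')
      invFun := fun q => (e ↑q.2).symm q.1
      source := p ⁻¹' V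
      target := V ×ˢ Set.univ
      baseSet := V
      open_baseSet := hVopen
      source_eq := rfl
      target_eq := rfl
      proj_toFun := fun y' _ => rfl
      map_source' := fun y' h => ⟨h, Set.mem_univ _⟩
      map_target' := fun q hq => by
        have := hsymm ↑q.2 q.1 (hVt q.2 hq.1)
        simpa [Set.mem_preimage, this] using hq.1
      left_inv' := fun y' h => (hidx y' h).symm
      right_inv' := fun q hq => by
        have hpq : p ((e ↑q.2).symm q.1) = q.1 := hsymm ↑q.2 q.1 (hVt q.2 hq.1)
        have : idx ((e ↑q.2).symm q.1) = q.2 :=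
          idx_eq _ q.2 (by rw [hpq]; exact hq.1) (by rw [hpq])
        simp [hpq, this]
      open_source := hVopen.preimage hpc
      open_target := hVopen.prod isOpen_univ
      continuousOn_toFun := by
        intro y' h
        have h' : p y' ∈ V := h
        apply ContinuousAt.continuousWithinAt
        have hopen : IsOpen ((e ↑(idx y')).source ∩ p ⁻¹' V) :=
          (e _).open_source.inter (hVopen.preimage hpc)
        have hmem' : y' ∈ (e ↑(idx y')).source ∩ p ⁻¹' V := ⟨hsrc y' h', h'⟩
        have heq : (fun z => (p z, idx z)) =ᶠ[nhds y'] fun z => (p z, idx y') := by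
          filter_upwards [hopen.mem_nhds hmem'] with z hz
          rw [idx_const y' z h' hz.2 hz.1]
        exact ContinuousAt.congr
          ((hpc.continuousAt).prodMk continuousAt_const) heq.symm
      continuousOn_invFun := by
        intro q hq
        apply ContinuousAt.continuousWithinAt
        have hopen : IsOpen (Set.univ ×ˢ ({q.2} : Set F) : Set (X × F)) :=
          isOpen_univ.prod (isOpen_discrete _)
        have heq : (fun r : X × F => (e ↑r.2).symm r.1)
            =ᶠ[nhds q] fun r : X × F => (e ↑q.2).symm r.1 := by
          filter_upwards [hopen.mem_nhds ⟨Set.mem_univ _, rfl⟩] with r hr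
          rw [show r.2 = q.2 from hr.2]
        refine ContinuousAt.congr ?_ heq.symm
        exact ((e ↑q.2).continuousAt_symm (hVt q.2 hq.1)).comp continuousAt_fst
    }) hx₀V
end

section
/- Let p : X̃ → X be a local homeomorphism with the path lifting and unique path lifting properties, where X̃ is Hausdorff. Suppose F : [0,1]×[0,1] → X is continuous and f̃ : [0,1] → X̃ is continuous with p ∘ f̃(t) = F(t,0) for all t. Then there exists a unique continuous F̃ : [0,1]×[0,1] → X̃ with p ∘ F̃ = F and F̃(t,0) = f̃(t) for all t ∈ [0,1]. -/
open unitInterval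

/-- homotopy lifting theorem for a local homeomorphism with the
path lifting and unique path lifting properties and Hausdorff domain: a
homotopy `F : I × I → X` lifts uniquely once a lift `f'` of its bottom edge
is prescribed. -/
theorem stmt_19 {X' X : Type*} [TopologicalSpace X'] [TopologicalSpace X]
    [T2Space X'] (p : X' → X) (hp : IsLocalHomeomorph p)
    (hpl : PathLifting p) (hupl : UniquePathLifting p)
    (F : C(I × I, X)) (f' : C(I, X'))
    (hf' : ∀ t : I, p (f' t) = F (t, 0)) :
    ∃! F' : C(I × I, X'),
      (∀ z : I × I, p (F' z) = F z) ∧ ∀ t : I, F' (t, 0) = f' t := by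
  classical
  -- choose lifts of vertical paths
  have hex : ∀ t : I, ∃ g : C(I, X'), (∀ s, p (g s) = F (t, s)) ∧ g 0 = f' t := by
    intro t
    obtain ⟨g, hg1, hg2⟩ := hpl (F.comp ⟨fun s => (t, s), Continuous.prodMk_right t⟩) (f' t)
      (by simpa using hf' t)
    exact ⟨g, fun s => hg1 s, hg2⟩
  choose g hg hg0 using hex
  set Ffun : I × I → X' := fun z => g z.1 z.2 with hFfun
  have hlift : ∀ z : I × I, p (Ffun z) = F z := fun z => hg z.1 z.2
  have hcont : Continuous Ffun := by
    rw [continuous_iff_continuousAt]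
    rintro ⟨t₀, s₀⟩
    set S : Set I :=
      {s : I | ∃ U : Set I, IsOpen U ∧ t₀ ∈ U ∧ ContinuousOn Ffun (U ×ˢ Set.Icc 0 s)} with hS
    have h0S : (0 : I) ∈ S := by
      refine ⟨Set.univ, isOpen_univ, trivial, ?_⟩
      refine (f'.continuous.comp continuous_fst).continuousOn.congr ?_
      rintro ⟨t, s⟩ ⟨-, hs⟩
      have hs0 : s = 0 := le_antisymm hs.2 hs.1
      subst hs0
      exact hg0 t
    have hSne : (Subtype.val '' S).Nonempty := ⟨0, 0, h0S, rfl⟩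
    have hSbdd : BddAbove (Subtype.val '' S) := ⟨1, by rintro x ⟨s, -, rfl⟩; exact s.2.2⟩
    set vr : ℝ := sSup (Subtype.val '' S) with hvr
    have hv0 : 0 ≤ vr := le_csSup hSbdd ⟨0, h0S, rfl⟩
    have hv1 : vr ≤ 1 := csSup_le hSne (by rintro x ⟨s, -, rfl⟩; exact s.2.2)
    set v : I := ⟨vr, hv0, hv1⟩ with hvdef
    have hub : ∀ s ∈ S, (s : ℝ) ≤ vr := fun s hs => le_csSup hSbdd ⟨s, hs, rfl⟩
    -- local homeomorph chart at `g t₀ v`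
    obtain ⟨e, hmem, hpe⟩ := hp (g t₀ v)
    have hV : F (t₀, v) ∈ e.target := by
      rw [← hg t₀ v, hpe]; exact e.map_source hmem
    obtain ⟨U₁, K, hU₁o, hKo, ht₀U₁, hvK, hsub⟩ :=
      isOpen_prod_iff.mp (e.open_target.preimage F.continuous) t₀ v hV
    have hK₂ : K ∩ (g t₀) ⁻¹' e.source ∈ nhds v :=
      Filter.inter_mem (hKo.mem_nhds hvK)
        ((e.open_source.preimage (g t₀).continuous).mem_nhds hmem)
    obtain ⟨ε, hε, hball⟩ := Metric.mem_nhds_iff.mp hK₂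
    -- endpoints of a small closed interval around v
    set l' : I := ⟨max (vr - ε / 2) 0, le_max_right _ _,
      max_le (by linarith) zero_le_one⟩ with hl'def
    set u' : I := ⟨min (vr + ε / 2) 1, le_min (by linarith) zero_le_one,
      min_le_right _ _⟩ with hu'def
    have hIccball : Set.Icc l' u' ⊆ K ∩ (g t₀) ⁻¹' e.source := by
      intro s hs
      apply hball
      have h1 : (s : ℝ) ≤ vr + ε / 2 := le_trans hs.2 (min_le_left _ _)
      have h2 : vr - ε / 2 ≤ (s : ℝ) := le_trans (le_max_left _ _) hs.1
      simp only [Metric.mem_ball, Subtype.dist_eq, Real.dist_eq]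
      rw [abs_sub_lt_iff]
      constructor <;> linarith
    have hlv : (l' : ℝ) ≤ vr := max_le (by linarith) hv0
    have hvu : v ≤ u' := by
      rw [← Subtype.coe_le_coe]
      exact le_min (by linarith) hv1
    -- pick `s₁ ∈ S` inside `[l', v]`
    obtain ⟨s₁, hs₁S, hls₁, hs₁v⟩ :
        ∃ s₁ ∈ S, (l' : ℝ) ≤ (s₁ : ℝ) ∧ (s₁ : ℝ) ≤ vr := by
      by_cases hc : vr ≤ (l' : ℝ)
      · have hvr0 : vr = 0 := by
          rcases max_cases (vr - ε / 2) 0 with ⟨h, -⟩ | ⟨h, -⟩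
          · rw [hl'def] at hc; simp only [h] at hc; linarith
          · rw [hl'def] at hc; simp only [h] at hc; linarith [hv0]
        refine ⟨0, h0S, ?_, ?_⟩
        · show (l' : ℝ) ≤ ((0 : I) : ℝ)
          simp only [hl'def, hvr0, Set.Icc.coe_zero]
          rw [max_le_iff]
          constructor <;> linarith
        · simp [hvr0]
      · push_neg at hc
        obtain ⟨x, ⟨s₁, hs₁S, rfl⟩, hx⟩ := exists_lt_of_lt_csSup hSne hc
        exact ⟨s₁, hs₁S, le_of_lt hx, hub s₁ hs₁S⟩
    have hs₁u' : s₁ ≤ u' := by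
      rw [← Subtype.coe_le_coe]
      exact le_trans hs₁v (Subtype.coe_le_coe.mpr hvu)
    have hls₁' : l' ≤ s₁ := Subtype.coe_le_coe.mp hls₁
    have hs₁mem : s₁ ∈ K ∩ (g t₀) ⁻¹' e.source := hIccball ⟨hls₁', hs₁u'⟩
    obtain ⟨U₂, hU₂o, ht₀U₂, hcontU₂⟩ := hs₁S
    -- continuity at `t₀` of `t ↦ Ffun (t, s₁)` and choice of `U₃`
    have hq : ContinuousAt (fun t => Ffun (t, s₁)) t₀ := by
      have h1 : ContinuousWithinAt Ffun (U₂ ×ˢ Set.Icc 0 s₁) (t₀, s₁) :=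
        hcontU₂ (t₀, s₁) ⟨ht₀U₂, nonneg', le_refl s₁⟩
      have hmaps : Set.MapsTo (fun t : I => (t, s₁)) U₂ (U₂ ×ˢ Set.Icc 0 s₁) :=
        fun t ht => ⟨ht, nonneg', le_refl s₁⟩
      have h2 : ContinuousWithinAt (Ffun ∘ fun t : I => (t, s₁)) U₂ t₀ :=
        ContinuousWithinAt.comp (f := fun t : I => (t, s₁)) h1
          (Continuous.prodMk_left s₁).continuousWithinAt hmaps
      exact h2.continuousAt (hU₂o.mem_nhds ht₀U₂)
    obtain ⟨U₃, hU₃sub, hU₃o, ht₀U₃⟩ := mem_nhds_iff.mp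
      (hq.preimage_mem_nhds (e.open_source.mem_nhds (show Ffun (t₀, s₁) ∈ e.source from
        hs₁mem.2)))
    have hU₃ : ∀ t ∈ U₃, Ffun (t, s₁) ∈ e.source := fun t ht => hU₃sub ht
    set U : Set I := U₁ ∩ U₂ ∩ U₃ with hUdef
    have hUo : IsOpen U := (hU₁o.inter hU₂o).inter hU₃o
    have ht₀U : t₀ ∈ U := ⟨⟨ht₀U₁, ht₀U₂⟩, ht₀U₃⟩
    have hIccK : Set.Icc s₁ u' ⊆ K := fun s hs =>
      (hIccball ⟨le_trans hls₁' hs.1, hs.2⟩).1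
    -- key claim : on `U × [s₁, u']` the lift is given by `e.symm ∘ F`
    have key : ∀ t ∈ U, ∀ s ∈ Set.Icc s₁ u', Ffun (t, s) = e.symm (F (t, s)) := by
      intro t ht s hs
      have hs₁ur : (s₁ : ℝ) ≤ (u' : ℝ) := Subtype.coe_le_coe.mpr hs₁u'
      have hmm : ∀ τ : I, (s₁ : ℝ) + τ * ((u' : ℝ) - s₁) ∈ Set.Icc (0 : ℝ) 1 := by
        intro τ
        constructor
        · nlinarith [τ.2.1, s₁.2.1]
        · nlinarith [τ.2.1, τ.2.2, u'.2.2]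
      have hvmc : Continuous fun τ : I => (⟨(s₁ : ℝ) + τ * ((u' : ℝ) - s₁), hmm τ⟩ : I) := by
        apply Continuous.subtype_mk
        exact continuous_const.add (continuous_subtype_val.mul continuous_const)
      set vm : C(I, I) := ⟨fun τ => ⟨(s₁ : ℝ) + τ * ((u' : ℝ) - s₁), hmm τ⟩, hvmc⟩ with hvmdef
      have hvm_mem : ∀ τ : I, vm τ ∈ Set.Icc s₁ u' := by
        intro τ
        constructor
        · rw [← Subtype.coe_le_coe]
          show (s₁ : ℝ) ≤ (s₁ : ℝ) + τ * ((u' : ℝ) - s₁)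
          nlinarith [τ.2.1, hs₁ur]
        · rw [← Subtype.coe_le_coe]
          show (s₁ : ℝ) + τ * ((u' : ℝ) - s₁) ≤ (u' : ℝ)
          nlinarith [τ.2.1, τ.2.2, hs₁ur]
      have hFmem : ∀ τ : I, F (t, vm τ) ∈ e.target := fun τ =>
        hsub ⟨ht.1.1, hIccK (hvm_mem τ)⟩
      have hvm0 : vm 0 = s₁ := by
        apply Subtype.ext
        show (s₁ : ℝ) + ((0 : I) : ℝ) * ((u' : ℝ) - s₁) = s₁
        simp
      set g₁ : C(I, X') := (g t).comp vm with hg₁def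
      set g₂ : C(I, X') := ⟨fun τ => e.symm (F (t, vm τ)),
        e.continuousOn_symm.comp_continuous
          (F.continuous.comp ((Continuous.prodMk_right t).comp vm.continuous)) hFmem⟩ with hg₂def
      have heq : g₁ = g₂ := by
        apply hupl
        · intro τ
          show p (g t (vm τ)) = p (e.symm (F (t, vm τ)))
          rw [hg t (vm τ), hpe]
          exact (e.right_inv (hFmem τ)).symm
        · show g t (vm 0) = e.symm (F (t, vm 0))
          rw [hvm0, ← hg t s₁, hpe]
          exact (e.left_inv (hU₃ t ht.2)).symm
      -- now hit `s` with a suitable parameter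
      rcases eq_or_lt_of_le hs₁ur with hequ | hlt
      · have hss₁ : s = s₁ := by
          apply Subtype.ext
          have h1 : (s₁ : ℝ) ≤ s := Subtype.coe_le_coe.mpr hs.1
          have h2 : (s : ℝ) ≤ u' := Subtype.coe_le_coe.mpr hs.2
          rw [← hequ] at h2
          linarith
        subst hss₁
        have := congrFun (congrArg DFunLike.coe heq) 0
        simp only [hg₁def, hg₂def, ContinuousMap.comp_apply, ContinuousMap.coe_mk] at this
        rw [hvm0] at this
        exact this
      · have hτmem : ((s : ℝ) - s₁) / ((u' : ℝ) - s₁) ∈ Set.Icc (0 : ℝ) 1 := by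
          have h1 : (s₁ : ℝ) ≤ s := Subtype.coe_le_coe.mpr hs.1
          have h2 : (s : ℝ) ≤ u' := Subtype.coe_le_coe.mpr hs.2
          constructor
          · apply div_nonneg <;> linarith
          · rw [div_le_one (by linarith)]; linarith
        set τ : I := ⟨_, hτmem⟩ with hτdef
        have hvτ : vm τ = s := by
          apply Subtype.ext
          show (s₁ : ℝ) + (((s : ℝ) - s₁) / ((u' : ℝ) - s₁)) * ((u' : ℝ) - s₁) = s
          rw [div_mul_cancel₀ _ (by linarith : (u' : ℝ) - s₁ ≠ 0)]
          ring
        have := congrFun (congrArg DFunLike.coe heq) τ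
        simp only [hg₁def, hg₂def, ContinuousMap.comp_apply, ContinuousMap.coe_mk] at this
        rw [hvτ] at this
        exact this
    -- `u' ∈ S`
    have hA1 : ContinuousOn Ffun (U ×ˢ Set.Icc 0 s₁) :=
      hcontU₂.mono (Set.prod_mono (fun t ht => ht.1.2) subset_rfl)
    have hA2 : ContinuousOn Ffun (U ×ˢ Set.Icc s₁ u') := by
      have hcomp : ContinuousOn (fun z : I × I => e.symm (F z)) (U ×ˢ Set.Icc s₁ u') := by
        apply e.continuousOn_symm.comp F.continuous.continuousOn
        intro z hz
        exact hsub ⟨hz.1.1.1, hIccK hz.2⟩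
      exact hcomp.congr fun z hz => key z.1 hz.1 z.2 hz.2
    have huS : u' ∈ S := by
      refine ⟨U, hUo, ht₀U, ?_⟩
      have hunion : (U ×ˢ Set.Icc (0 : I) u') =
          (U ×ˢ Set.Icc 0 s₁) ∪ (U ×ˢ Set.Icc s₁ u') := by
        rw [← Set.prod_union, Set.Icc_union_Icc_eq_Icc nonneg' hs₁u']
      rw [hunion]
      intro z hz
      have cwa₁ : ContinuousWithinAt Ffun (U ×ˢ Set.Icc 0 s₁) z := by
        by_cases h : z.2 ≤ s₁
        · have hzU : z.1 ∈ U := by rcases hz with h' | h' <;> exact h'.1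
          exact hA1 z ⟨hzU, nonneg', h⟩
        · apply continuousWithinAt_of_notMem_closure
          intro hcl
          have hcl' : z ∈ (Set.univ ×ˢ Set.Icc (0 : I) s₁ : Set (I × I)) :=
            closure_minimal (Set.prod_mono (Set.subset_univ U) subset_rfl)
              (isClosed_univ.prod isClosed_Icc) hcl
          exact h hcl'.2.2
      have cwa₂ : ContinuousWithinAt Ffun (U ×ˢ Set.Icc s₁ u') z := by
        by_cases h : s₁ ≤ z.2
        · have hzU : z.1 ∈ U := by rcases hz with h' | h' <;> exact h'.1
          have hzu : z.2 ≤ u' := by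
            rcases hz with h' | h'
            · exact le_trans h'.2.2 hs₁u'
            · exact h'.2.2
          exact hA2 z ⟨hzU, h, hzu⟩
        · apply continuousWithinAt_of_notMem_closure
          intro hcl
          have hcl' : z ∈ (Set.univ ×ˢ Set.Icc s₁ u' : Set (I × I)) :=
            closure_minimal (Set.prod_mono (Set.subset_univ U) subset_rfl)
              (isClosed_univ.prod isClosed_Icc) hcl
          exact h hcl'.2.1
      exact cwa₁.union cwa₂
    -- conclude `vr = 1` and `1 ∈ S`
    have hu'v : (u' : ℝ) ≤ vr := hub u' huS
    have hvr1 : vr = 1 := by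
      by_contra hne
      have hlt1 : vr < 1 := lt_of_le_of_ne hv1 hne
      have : vr < (u' : ℝ) := lt_min (by linarith) hlt1
      linarith
    have hu'1 : u' = 1 := by
      apply Subtype.ext
      show min (vr + ε / 2) 1 = ((1 : I) : ℝ)
      rw [hvr1]
      simp
      linarith
    rw [hu'1] at huS
    obtain ⟨U, hUo', ht₀U', hcU⟩ := huS
    have hIcc1 : Set.Icc (0 : I) 1 = Set.univ := by
      apply Set.eq_univ_of_forall
      intro x
      exact ⟨nonneg', le_one'⟩
    rw [hIcc1] at hcU
    exact hcU.continuousAt ((hUo'.prod isOpen_univ).mem_nhds ⟨ht₀U', Set.mem_univ _⟩)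
  -- package up and prove uniqueness
  refine ⟨⟨Ffun, hcont⟩, ⟨hlift, fun t => hg0 t⟩, ?_⟩
  rintro G ⟨hG1, hG2⟩
  ext ⟨t, s⟩
  have heq := hupl (G.comp ⟨fun s => (t, s), Continuous.prodMk_right t⟩)
    ((⟨Ffun, hcont⟩ : C(I × I, X')).comp ⟨fun s => (t, s), Continuous.prodMk_right t⟩)
    (fun s => by simp [hG1, hlift]) (by simp [hG2 t, hg0 t]; exact (hg0 t).symm ▸ rfl)
  have := congrFun (congrArg DFunLike.coe heq) s
  simpa using this
end
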